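/- arXiv:math/0007192 — 4 statements merged into one kernel-verified Lean document; each statement's English description precedes it below -/
import Mathlib

section
/- Let 𝔥 ⊆ sp(V,ω) be the Lie subalgebra of elements preserving both V1 and V2. Then the quotient sp(V,ω)/𝔥, regarded as a module over 𝔥 via the adjoint action, is a nonzero irreducible 𝔥-module (it has no Lie submodules other than 0 and itself). -/
/-!
STATEMENT 0.  Setting: `K` a field of characteristic zero, `V` a finite-dimensional
`K`-vector space, `ω` a nondegenerate alternating bilinear form, `V = V1 ⊕ V2` with
`V1, V2` nonzero, `ω`-orthogonal, and `ω` nondegenerate on each `Vi`.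
`sp(V,ω)` is `skewAdjointLieSubalgebra ω` and `𝔥` is the subalgebra of elements
preserving both `V1` and `V2`.

The claim is that the quotient `sp(V,ω)/𝔥` is a nonzero irreducible `𝔥`-module.
We phrase this via the standard bijection between `𝔥`-submodules of the quotient
`sp/𝔥` and `K`-subspaces `W` with `𝔥 ⊆ W ⊆ sp` stable under the adjoint action of
`𝔥`: the quotient is nonzero (i.e. `𝔥 ≠ sp`) and the only such intermediate
subspaces are `𝔥` and `sp` themselves.
-/


open LinearMap (BilinForm)

namespace SpIrredAux

variable {K : Type*} [Field K] {V : Type*} [AddCommGroup V] [Module K V]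

noncomputable def rk (ω : BilinForm K V) (u w : V) : Module.End K V :=
  (ω w).smulRight u + (ω u).smulRight w

lemma rk_apply (ω : BilinForm K V) (u w x : V) :
    rk ω u w x = ω w x • u + ω u x • w := rfl

lemma mem_sp_iff (ω : BilinForm K V) (f : Module.End K V) :
    f ∈ skewAdjointLieSubalgebra ω ↔ ∀ x y, ω (f x) y = - ω x (f y) := by
  have h0 : f ∈ skewAdjointLieSubalgebra ω ↔ ω.IsSkewAdjoint f := by
    rw [← LinearMap.mem_skewAdjointSubmodule]; exact Iff.rfl
  rw [h0]
  constructor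
  · intro h x y
    have h' : ∀ x y, ω (f x) y = ω x ((-f) y) := h
    simpa using h' x y
  · intro h
    show ∀ x y, ω (f x) y = ω x ((-f) y)
    intro x y; simpa using h x y

lemma rk_sp (ω : BilinForm K V) (hAlt : ω.IsAlt) (u w : V) :
    ∀ x y, ω (rk ω u w x) y = - ω x (rk ω u w y) := by
  intro x y
  have h1 : ω x u = - ω u x := (hAlt.neg_eq u x).symm
  have h2 : ω x w = - ω w x := (hAlt.neg_eq w x).symm
  simp only [rk_apply, map_add, map_smul, LinearMap.add_apply, LinearMap.smul_apply,
    smul_eq_mul, h1, h2]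
  ring

lemma rk_smul_left (ω : BilinForm K V) (c : K) (u w : V) :
    rk ω (c • u) w = c • rk ω u w := by
  ext x
  simp only [rk_apply, map_smul, LinearMap.smul_apply, smul_eq_mul, rk_apply]
  module

lemma rk_smul_right (ω : BilinForm K V) (c : K) (u w : V) :
    rk ω u (c • w) = c • rk ω u w := by
  ext x
  simp only [rk_apply, map_smul, LinearMap.smul_apply, smul_eq_mul, rk_apply]
  module

end SpIrredAux

namespace SpIrredAux

variable {K : Type*} [Field K] {V : Type*} [AddCommGroup V] [Module K V]
variable {ω : BilinForm K V} {V1 V2 : Submodule K V}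

section

variable (hAlt : ω.IsAlt) (hcompl : IsCompl V1 V2)
  (horth : ∀ x ∈ V1, ∀ y ∈ V2, ω x y = 0)
  (hNd1 : (ω.restrict V1).Nondegenerate) (hNd2 : (ω.restrict V2).Nondegenerate)

include horth hAlt in
lemma horth' : ∀ y ∈ V2, ∀ x ∈ V1, ω y x = 0 := by
  intro y hy x hx
  rw [← hAlt.neg_eq, horth x hx y hy, neg_zero]

include hcompl hNd1 in
lemma offdiag_eq_zero {f : Module.End K V}
    (hf : ∀ x y, ω (f x) y = - ω x (f y))
    (h21 : ∀ x ∈ V2, f x ∈ V1)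
    (h0 : ∀ x ∈ V1, f x = 0) : f = 0 := by
  ext v
  obtain ⟨y, hy, z, hz, rfl⟩ : ∃ y ∈ V1, ∃ z ∈ V2, y + z = v := by
    have : v ∈ V1 ⊔ V2 := by rw [hcompl.sup_eq_top]; trivial
    simpa [Submodule.mem_sup] using this
  have hz0 : f z = 0 := by
    have hmem := h21 z hz
    have hker : ∀ n : V1, (ω.restrict V1) ⟨f z, hmem⟩ n = 0 := by
      rintro ⟨x, hx⟩
      have h := hf z x
      rw [h0 x hx, map_zero, neg_zero] at h
      simpa [LinearMap.BilinForm.restrict_apply] using h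
    have := hNd1.1 _ hker
    exact congrArg Subtype.val this
  simp [map_add, h0 y hy, hz0]

include hcompl hNd1 in
lemma eq_of_agree_on_V1 {f g : Module.End K V}
    (hf : ∀ x y, ω (f x) y = - ω x (f y)) (hg : ∀ x y, ω (g x) y = - ω x (g y))
    (hf21 : ∀ x ∈ V2, f x ∈ V1) (hg21 : ∀ x ∈ V2, g x ∈ V1)
    (hagree : ∀ x ∈ V1, f x = g x) : f = g := by
  have h := offdiag_eq_zero hcompl hNd1 (f := f - g)
    (fun x y => by simp only [LinearMap.sub_apply, map_sub, hf, hg]; ring)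
    (fun x hx => sub_mem (hf21 x hx) (hg21 x hx))
    (fun x hx => by simp [LinearMap.sub_apply, hagree x hx])
  ext v
  have := congrFun (congrArg (fun (t : Module.End K V) => t.toFun) h) v
  simpa [sub_eq_zero] using this

end

end SpIrredAux

namespace SpIrredAux

variable {K : Type*} [Field K] {V : Type*} [AddCommGroup V] [Module K V]
variable {ω : BilinForm K V} {V1 V2 : Submodule K V}

lemma lie_apply (f g : Module.End K V) (x : V) : ⁅f, g⁆ x = f (g x) - g (f x) := by
  rw [Ring.lie_def]; simp [LinearMap.sub_apply, Module.End.mul_apply]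

lemma sp_bracket {f g : Module.End K V}
    (hf : ∀ x y, ω (f x) y = - ω x (f y)) (hg : ∀ x y, ω (g x) y = - ω x (g y)) :
    ∀ x y, ω (⁅f, g⁆ x) y = - ω x (⁅f, g⁆ y) := by
  intro x y
  rw [lie_apply, lie_apply, map_sub, LinearMap.sub_apply]
  rw [hf (g x) y, hg (f x) y, hg x (f y), hf x (g y)]
  rw [map_sub]
  ring

section

variable (hAlt : ω.IsAlt) (hcompl : IsCompl V1 V2)
  (horth : ∀ x ∈ V1, ∀ y ∈ V2, ω x y = 0)
  (hNd1 : (ω.restrict V1).Nondegenerate)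

include hAlt hcompl horth hNd1 in
/-- identity A : bracket of a `V1`-type generator against an off-diagonal element. -/
lemma bracketA {u u' : V} (hu : u ∈ V1) (hu' : u' ∈ V1) {g : Module.End K V}
    (hg : ∀ x y, ω (g x) y = - ω x (g y))
    (hg12 : ∀ x ∈ V1, g x ∈ V2) (hg21 : ∀ x ∈ V2, g x ∈ V1) :
    ⁅rk ω u u', g⁆ = -(rk ω u (g u') + rk ω u' (g u)) := by
  apply eq_of_agree_on_V1 hcompl hNd1
  · exact sp_bracket (rk_sp ω hAlt u u') hg
  · intro x y
    have h1 := rk_sp ω hAlt u (g u') x y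
    have h2 := rk_sp ω hAlt u' (g u) x y
    simp only [LinearMap.neg_apply, LinearMap.add_apply, map_neg, map_add, h1, h2]
    ring
  · -- bracket maps V2 into V1
    intro x hx
    rw [lie_apply]
    have hz : rk ω u u' x = 0 := by
      rw [rk_apply, horth u' hu' x hx, horth u hu x hx, zero_smul, zero_smul, add_zero]
    rw [hz, map_zero, sub_zero, rk_apply]
    exact add_mem (Submodule.smul_mem _ _ hu) (Submodule.smul_mem _ _ hu')
  · -- RHS maps V2 into V1
    intro x hx
    simp only [LinearMap.neg_apply, LinearMap.add_apply, rk_apply]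
    rw [horth u hu x hx, horth u' hu' x hx, zero_smul, zero_smul, add_zero, add_zero]
    exact neg_mem (add_mem (Submodule.smul_mem _ _ hu) (Submodule.smul_mem _ _ hu'))
  · -- agreement on V1
    intro x hx
    rw [lie_apply]
    have hgu' : ω u (g x) = 0 := horth u hu _ (hg12 x hx)
    have hgu'2 : ω u' (g x) = 0 := horth u' hu' _ (hg12 x hx)
    have h0 : rk ω u u' (g x) = 0 := by
      rw [rk_apply, hgu', hgu'2, zero_smul, zero_smul, add_zero]
    rw [h0, zero_sub, rk_apply, map_add, map_smul, map_smul]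
    have e1 : ω (g u') x = 0 := horth' hAlt horth _ (hg12 u' hu') x hx
    have e2 : ω (g u) x = 0 := horth' hAlt horth _ (hg12 u hu) x hx
    simp only [LinearMap.neg_apply, LinearMap.add_apply, rk_apply, e1, e2, zero_smul,
      zero_add, add_zero]
    abel

include hAlt hcompl horth hNd1 in
/-- identity B : bracket of a `V2`-type generator against an off-diagonal element. -/
lemma bracketB {w w' : V} (hw : w ∈ V2) (hw' : w' ∈ V2) {g : Module.End K V}
    (hg : ∀ x y, ω (g x) y = - ω x (g y))
    (hg12 : ∀ x ∈ V1, g x ∈ V2) (hg21 : ∀ x ∈ V2, g x ∈ V1) :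
    ⁅rk ω w w', g⁆ = -(rk ω (g w') w + rk ω (g w) w') := by
  apply eq_of_agree_on_V1 hcompl hNd1
  · exact sp_bracket (rk_sp ω hAlt w w') hg
  · intro x y
    have h1 := rk_sp ω hAlt (g w') w x y
    have h2 := rk_sp ω hAlt (g w) w' x y
    simp only [LinearMap.neg_apply, LinearMap.add_apply, map_neg, map_add, h1, h2]
    ring
  · intro x hx
    rw [lie_apply]
    have h0 : rk ω w w' (g x) = 0 := by
      have hgx := hg21 x hx
      rw [rk_apply, horth' hAlt horth w' hw' _ hgx, horth' hAlt horth w hw _ hgx,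
        zero_smul, zero_smul, add_zero]
    rw [h0, zero_sub]
    exact neg_mem (hg21 _ (by
      rw [rk_apply]
      exact add_mem (Submodule.smul_mem _ _ hw) (Submodule.smul_mem _ _ hw')))
  · intro x hx
    simp only [LinearMap.neg_apply, LinearMap.add_apply, rk_apply]
    rw [horth _ (hg21 w' hw') x hx, horth _ (hg21 w hw) x hx, zero_smul, zero_smul,
      add_zero, add_zero]
    exact neg_mem (add_mem (Submodule.smul_mem _ _ (hg21 w' hw'))
      (Submodule.smul_mem _ _ (hg21 w hw)))
  · intro x hx
    rw [lie_apply]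
    have h0 : rk ω w w' x = 0 := by
      rw [rk_apply, horth' hAlt horth w' hw' x hx, horth' hAlt horth w hw x hx,
        zero_smul, zero_smul, add_zero]
    rw [h0, map_zero, sub_zero, rk_apply]
    -- LHS = ω w' (g x) • w + ω w (g x) • w'
    have e1 : ω w' (g x) = - ω (g w') x := by
      rw [← hAlt.neg_eq (g x) w', hg x w', hAlt.neg_eq]
    have e2 : ω w (g x) = - ω (g w) x := by
      rw [← hAlt.neg_eq (g x) w, hg x w, hAlt.neg_eq]
    have e3 : ω w x = 0 := horth' hAlt horth w hw x hx
    have e4 : ω w' x = 0 := horth' hAlt horth w' hw' x hx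
    simp only [LinearMap.neg_apply, LinearMap.add_apply, rk_apply, e1, e2, e3, e4,
      zero_smul, zero_add, add_zero, neg_smul, neg_add_rev]
    abel

end

end SpIrredAux

namespace SpIrredAux

variable {K : Type*} [Field K] {V : Type*} [AddCommGroup V] [Module K V]
variable {ω : BilinForm K V} {V1 V2 : Submodule K V}

section

variable (hAlt : ω.IsAlt) (hcompl : IsCompl V1 V2)
  (horth : ∀ x ∈ V1, ∀ y ∈ V2, ω x y = 0)
  (hNd1 : (ω.restrict V1).Nondegenerate)

include horth in
lemma rk_maps21 {u w : V} (hu : u ∈ V1) (hw : w ∈ V2) :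
    ∀ x ∈ V2, rk ω u w x ∈ V1 := by
  intro x hx
  rw [rk_apply, horth u hu x hx, zero_smul, add_zero]
  exact Submodule.smul_mem _ _ hu

include hAlt horth in
lemma rk_maps12 {u w : V} (hu : u ∈ V1) (hw : w ∈ V2) :
    ∀ x ∈ V1, rk ω u w x ∈ V2 := by
  intro x hx
  rw [rk_apply, horth' hAlt horth w hw x hx, zero_smul, zero_add]
  exact Submodule.smul_mem _ _ hw

include hAlt hcompl horth in
lemma decomp {f : Module.End K V} (hf : ∀ x y, ω (f x) y = - ω x (f y)) :
    ∃ fd fm : Module.End K V, f = fd + fm ∧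
      (∀ x y, ω (fd x) y = - ω x (fd y)) ∧ (∀ x ∈ V1, fd x ∈ V1) ∧ (∀ x ∈ V2, fd x ∈ V2) ∧
      (∀ x y, ω (fm x) y = - ω x (fm y)) ∧ (∀ x ∈ V1, fm x ∈ V2) ∧ (∀ x ∈ V2, fm x ∈ V1) := by
  set pr : V →ₗ[K] V := V1.subtype ∘ₗ (V1.projectionOnto V2 hcompl) with hprdef
  set qr : V →ₗ[K] V := V2.subtype ∘ₗ (V2.projectionOnto V1 hcompl.symm) with hqrdef
  have hprmem : ∀ v, pr v ∈ V1 := fun v => (V1.projectionOnto V2 hcompl v).2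
  have hqrmem : ∀ v, qr v ∈ V2 := fun v => (V2.projectionOnto V1 hcompl.symm v).2
  have hpr1 : ∀ x ∈ V1, pr x = x := fun x hx => by
    simp only [hprdef, LinearMap.comp_apply, Submodule.projectionOnto_apply_of_mem_left hcompl hx,
      Submodule.coe_subtype]
  have hpr2 : ∀ x ∈ V2, pr x = 0 := fun x hx => by
    have h := Submodule.projectionOnto_apply_of_mem_right hcompl hx
    simp only [hprdef, LinearMap.comp_apply, h, Submodule.coe_subtype, ZeroMemClass.coe_zero]
  have hqr1 : ∀ x ∈ V2, qr x = x := fun x hx => by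
    simp only [hqrdef, LinearMap.comp_apply,
      Submodule.projectionOnto_apply_of_mem_left hcompl.symm hx, Submodule.coe_subtype]
  have hqr2 : ∀ x ∈ V1, qr x = 0 := fun x hx => by
    have h := Submodule.projectionOnto_apply_of_mem_right hcompl.symm hx
    simp only [hqrdef, LinearMap.comp_apply, h, Submodule.coe_subtype, ZeroMemClass.coe_zero]
  have hdec : ∀ v : V, ∃ y ∈ V1, ∃ z ∈ V2, y + z = v := by
    intro v
    have : v ∈ V1 ⊔ V2 := by rw [hcompl.sup_eq_top]; trivial
    simpa [Submodule.mem_sup] using this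
  have hsum : ∀ v, pr v + qr v = v := by
    intro v
    obtain ⟨y, hy, z, hz, rfl⟩ := hdec v
    rw [map_add, map_add, hpr1 y hy, hpr2 z hz, hqr1 z hz, hqr2 y hy]
    abel
  have hprsa : ∀ x y, ω (pr x) y = ω x (pr y) := by
    intro x y
    obtain ⟨x1, hx1, x2, hx2, rfl⟩ := hdec x
    obtain ⟨y1, hy1, y2, hy2, rfl⟩ := hdec y
    have hpx : pr (x1 + x2) = x1 := by rw [map_add, hpr1 x1 hx1, hpr2 x2 hx2, add_zero]
    have hpy : pr (y1 + y2) = y1 := by rw [map_add, hpr1 y1 hy1, hpr2 y2 hy2, add_zero]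
    have e1 : ω x1 y2 = 0 := horth x1 hx1 y2 hy2
    have e2 : ω x2 y1 = 0 := horth' hAlt horth x2 hx2 y1 hy1
    simp only [hpx, hpy, map_add, LinearMap.add_apply, e1, e2, add_zero, zero_add]
  have hqrsa : ∀ x y, ω (qr x) y = ω x (qr y) := by
    intro x y
    obtain ⟨x1, hx1, x2, hx2, rfl⟩ := hdec x
    obtain ⟨y1, hy1, y2, hy2, rfl⟩ := hdec y
    have hpx : qr (x1 + x2) = x2 := by rw [map_add, hqr1 x2 hx2, hqr2 x1 hx1, zero_add]
    have hpy : qr (y1 + y2) = y2 := by rw [map_add, hqr1 y2 hy2, hqr2 y1 hy1, zero_add]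
    have e1 : ω x1 y2 = 0 := horth x1 hx1 y2 hy2
    have e2 : ω x2 y1 = 0 := horth' hAlt horth x2 hx2 y1 hy1
    simp only [hpx, hpy, map_add, LinearMap.add_apply, e1, e2, add_zero, zero_add]
  refine ⟨pr ∘ₗ f ∘ₗ pr + qr ∘ₗ f ∘ₗ qr, f - (pr ∘ₗ f ∘ₗ pr + qr ∘ₗ f ∘ₗ qr),
    by abel, ?_, ?_, ?_, ?_, ?_, ?_⟩
  · intro x y
    simp only [LinearMap.add_apply, LinearMap.comp_apply, map_add, LinearMap.add_apply]
    rw [hprsa (f (pr x)) y, hqrsa (f (qr x)) y, hf (pr x) (pr y), hf (qr x) (qr y),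
      hprsa x (f (pr y)), hqrsa x (f (qr y))]
    ring
  · intro x hx
    simp only [LinearMap.add_apply, LinearMap.comp_apply]
    rw [hqr2 x hx, map_zero, map_zero, add_zero]
    exact hprmem _
  · intro x hx
    simp only [LinearMap.add_apply, LinearMap.comp_apply]
    rw [hpr2 x hx, map_zero, map_zero, zero_add]
    exact hqrmem _
  · intro x y
    simp only [LinearMap.sub_apply, LinearMap.add_apply, LinearMap.comp_apply, map_sub,
      map_add, LinearMap.sub_apply, LinearMap.add_apply]
    rw [hf x y, hprsa (f (pr x)) y, hqrsa (f (qr x)) y, hf (pr x) (pr y), hf (qr x) (qr y),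
      hprsa x (f (pr y)), hqrsa x (f (qr y))]
    ring
  · intro x hx
    simp only [LinearMap.sub_apply, LinearMap.add_apply, LinearMap.comp_apply]
    rw [hqr2 x hx, map_zero, map_zero, add_zero, hpr1 x hx]
    have h2 : f x - pr (f x) = qr (f x) := (eq_sub_of_add_eq' (hsum (f x))).symm
    rw [h2]
    exact hqrmem _
  · intro x hx
    simp only [LinearMap.sub_apply, LinearMap.add_apply, LinearMap.comp_apply]
    rw [hpr2 x hx, map_zero, map_zero, zero_add, hqr1 x hx]
    have h2 : f x - qr (f x) = pr (f x) := (eq_sub_of_add_eq (hsum (f x))).symm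
    rw [h2]
    exact hprmem _

end

end SpIrredAux

namespace SpIrredAux

variable {K : Type*} [Field K] {V : Type*} [AddCommGroup V] [Module K V]
variable {ω : BilinForm K V} {V1 V2 : Submodule K V}

section

variable (hAlt : ω.IsAlt) (hcompl : IsCompl V1 V2)
  (horth : ∀ x ∈ V1, ∀ y ∈ V2, ω x y = 0)
  (hNd1 : (ω.restrict V1).Nondegenerate)

include hAlt hcompl horth hNd1 in
lemma offdiag_mem [FiniteDimensional K V] {W : Submodule K (Module.End K V)}
    (hr : ∀ u ∈ V1, ∀ w ∈ V2, rk ω u w ∈ W)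
    {g : Module.End K V} (hg : ∀ x y, ω (g x) y = - ω x (g y))
    (hg12 : ∀ x ∈ V1, g x ∈ V2) (hg21 : ∀ x ∈ V2, g x ∈ V1) : g ∈ W := by
  classical
  set b := Module.finBasis K V2 with hb
  set g' : V1 →ₗ[K] V2 :=
    LinearMap.codRestrict V2 (g ∘ₗ V1.subtype) (fun x => hg12 x x.2) with hg'
  set u : Fin (Module.finrank K V2) → V1 :=
    fun i => ((ω.restrict V1).toDual hNd1).symm ((b.coord i) ∘ₗ g') with hu
  have hkey : ∀ i (x : V1), ω (u i : V) (x : V) = b.coord i (g' x) := by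
    intro i x
    have h := LinearMap.BilinForm.apply_toDual_symm_apply
      (B := ω.restrict V1) (hB := hNd1) (f := (b.coord i) ∘ₗ g') (v := x)
    simpa [LinearMap.BilinForm.restrict_apply] using h
  set s : Module.End K V := ∑ i, rk ω ((u i : V)) ((b i : V)) with hs
  have hsW : s ∈ W := Submodule.sum_mem _ (fun i _ => hr _ (u i).2 _ (b i).2)
  have hssp : ∀ x y, ω (s x) y = - ω x (s y) := by
    intro x y
    rw [hs, LinearMap.sum_apply, LinearMap.sum_apply, map_sum, LinearMap.sum_apply,
      map_sum]
    rw [Finset.sum_congr rfl (fun i _ => rk_sp ω hAlt (u i : V) (b i : V) x y)]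
    rw [← Finset.sum_neg_distrib]
  have hs21 : ∀ x ∈ V2, s x ∈ V1 := by
    intro x hx
    rw [hs, LinearMap.sum_apply]
    exact Submodule.sum_mem _
      (fun i _ => rk_maps21 horth (u i).2 (b i).2 x hx)
  have hagree : ∀ x ∈ V1, g x = s x := by
    intro x hx
    have hgx : g x = ((g' ⟨x, hx⟩ : V2) : V) := rfl
    rw [hgx, ← Module.Basis.sum_repr b (g' ⟨x, hx⟩)]
    rw [hs, LinearMap.sum_apply]
    rw [Submodule.coe_sum]
    refine Finset.sum_congr rfl ?_
    intro i _
    rw [rk_apply, horth' hAlt horth _ (b i).2 x hx, zero_smul, zero_add,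
      hkey i ⟨x, hx⟩]
    rw [SetLike.val_smul]
    rfl
  have : g = s := eq_of_agree_on_V1 hcompl hNd1 hg hssp hg21 hs21 hagree
  rw [this]; exact hsW

end

end SpIrredAux

open SpIrredAux

theorem sp_quotient_by_block_diagonal_is_irreducible
    {K : Type*} [Field K] [CharZero K]
    {V : Type*} [AddCommGroup V] [Module K V] [FiniteDimensional K V]
    (ω : LinearMap.BilinForm K V) (hAlt : ω.IsAlt) (hNd : ω.Nondegenerate)
    (V1 V2 : Submodule K V) (h1 : V1 ≠ ⊥) (h2 : V2 ≠ ⊥) (hcompl : IsCompl V1 V2)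
    (horth : ∀ x ∈ V1, ∀ y ∈ V2, ω x y = 0)
    (hNd1 : (ω.restrict V1).Nondegenerate) (hNd2 : (ω.restrict V2).Nondegenerate) :
    -- the quotient `sp/𝔥` is nonzero:
    (∃ f : Module.End K V, f ∈ skewAdjointLieSubalgebra ω ∧
        ¬ ((∀ x ∈ V1, f x ∈ V1) ∧ (∀ x ∈ V2, f x ∈ V2))) ∧
    -- and it is irreducible as an `𝔥`-module:
    ∀ W : Submodule K (Module.End K V),
      (∀ f ∈ W, f ∈ skewAdjointLieSubalgebra ω) →
      (∀ f ∈ skewAdjointLieSubalgebra ω,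
        (∀ x ∈ V1, f x ∈ V1) → (∀ x ∈ V2, f x ∈ V2) → f ∈ W) →
      (∀ h ∈ skewAdjointLieSubalgebra ω, (∀ x ∈ V1, h x ∈ V1) → (∀ x ∈ V2, h x ∈ V2) →
        ∀ f ∈ W, ⁅h, f⁆ ∈ W) →
      ((∀ f, f ∈ W ↔ f ∈ skewAdjointLieSubalgebra ω ∧
            (∀ x ∈ V1, f x ∈ V1) ∧ (∀ x ∈ V2, f x ∈ V2)) ∨
       (∀ f, f ∈ W ↔ f ∈ skewAdjointLieSubalgebra ω)) := by
  classical
  -- nondegeneracy of the restrictions, in unbundled form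
  have hnd1' : ∀ v ∈ V1, v ≠ 0 → ∃ x ∈ V1, ω v x ≠ 0 := by
    intro v hv hvne
    by_contra hc
    push_neg at hc
    have h0 : (⟨v, hv⟩ : V1) = 0 := hNd1.1 _ (fun n => by
      simpa [LinearMap.BilinForm.restrict_apply] using hc n n.2)
    exact hvne (by simpa using congrArg Subtype.val h0)
  have hnd2' : ∀ v ∈ V2, v ≠ 0 → ∃ x ∈ V2, ω v x ≠ 0 := by
    intro v hv hvne
    by_contra hc
    push_neg at hc
    have h0 : (⟨v, hv⟩ : V2) = 0 := hNd2.1 _ (fun n => by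
      simpa [LinearMap.BilinForm.restrict_apply] using hc n n.2)
    exact hvne (by simpa using congrArg Subtype.val h0)
  -- basic facts about the generators
  have hD1 : ∀ u ∈ V1, ∀ u' ∈ V1, rk ω u u' ∈ skewAdjointLieSubalgebra ω ∧
      (∀ x ∈ V1, rk ω u u' x ∈ V1) ∧ (∀ x ∈ V2, rk ω u u' x ∈ V2) := by
    intro u hu u' hu'
    refine ⟨(mem_sp_iff ω _).2 (rk_sp ω hAlt u u'), ?_, ?_⟩
    · intro x hx
      rw [rk_apply]
      exact add_mem (Submodule.smul_mem _ _ hu) (Submodule.smul_mem _ _ hu')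
    · intro x hx
      rw [rk_apply, horth u hu x hx, horth u' hu' x hx, zero_smul, zero_smul, add_zero]
      exact zero_mem _
  have hD2 : ∀ w ∈ V2, ∀ w' ∈ V2, rk ω w w' ∈ skewAdjointLieSubalgebra ω ∧
      (∀ x ∈ V1, rk ω w w' x ∈ V1) ∧ (∀ x ∈ V2, rk ω w w' x ∈ V2) := by
    intro w hw w' hw'
    refine ⟨(mem_sp_iff ω _).2 (rk_sp ω hAlt w w'), ?_, ?_⟩
    · intro x hx
      rw [rk_apply, horth' hAlt horth w hw x hx, horth' hAlt horth w' hw' x hx,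
        zero_smul, zero_smul, add_zero]
      exact zero_mem _
    · intro x hx
      rw [rk_apply]
      exact add_mem (Submodule.smul_mem _ _ hw) (Submodule.smul_mem _ _ hw')
  constructor
  · -- the quotient is nonzero
    obtain ⟨x1, hx1, hx1ne⟩ := Submodule.exists_mem_ne_zero_of_ne_bot h1
    obtain ⟨x2, hx2, hx2ne⟩ := Submodule.exists_mem_ne_zero_of_ne_bot h2
    refine ⟨rk ω x1 x2, (mem_sp_iff ω _).2 (rk_sp ω hAlt x1 x2), ?_⟩
    rintro ⟨hp1, -⟩
    obtain ⟨x, hxV1, hxne⟩ := hnd1' x1 hx1 hx1ne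
    have hfx : rk ω x1 x2 x = ω x1 x • x2 := by
      rw [rk_apply, horth' hAlt horth x2 hx2 x hxV1, zero_smul, zero_add]
    have hmem1 : ω x1 x • x2 ∈ V1 := by rw [← hfx]; exact hp1 x hxV1
    have hmem2 : ω x1 x • x2 ∈ V2 := Submodule.smul_mem _ _ hx2
    have h0 : ω x1 x • x2 = 0 :=
      (Submodule.disjoint_def.1 hcompl.disjoint) _ hmem1 hmem2
    rcases smul_eq_zero.1 h0 with h | h
    · exact hxne h
    · exact hx2ne h
  · -- irreducibility
    intro W hW1 hW2 hW3
    by_cases hall : ∀ f ∈ W, (∀ x ∈ V1, f x ∈ V1) ∧ (∀ x ∈ V2, f x ∈ V2)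
    · left
      intro f
      exact ⟨fun h => ⟨hW1 f h, hall f h⟩, fun ⟨hs, ha, hb⟩ => hW2 f hs ha hb⟩
    right
    push_neg at hall
    obtain ⟨f, hfW, hfnp⟩ := hall
    -- helpers for dividing by nonzero scalars inside W
    have hscal : ∀ (c : K) (z : Module.End K V), c ≠ 0 → c • z ∈ W → z ∈ W := by
      intro c z hc hz
      have := Submodule.smul_mem W c⁻¹ hz
      rwa [smul_smul, inv_mul_cancel₀ hc, one_smul] at this
    have hfsp := (mem_sp_iff ω f).1 (hW1 f hfW)
    obtain ⟨fd, fm, hfdm, hfdsp, hfd1, hfd2, hfmsp, hfm12, hfm21⟩ :=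
      decomp hAlt hcompl horth hfsp
    have hfdW : fd ∈ W := hW2 fd ((mem_sp_iff ω fd).2 hfdsp) hfd1 hfd2
    have hfmW : fm ∈ W := by
      have he : fm = f - fd := by rw [hfdm]; abel
      rw [he]; exact Submodule.sub_mem _ hfW hfdW
    have hfmne : ∃ a ∈ V1, fm a ≠ 0 := by
      by_contra hc
      push_neg at hc
      have hfm0 : fm = 0 := offdiag_eq_zero hcompl hNd1 hfmsp hfm21 hc
      have hffd : f = fd := by rw [hfdm, hfm0, add_zero]
      obtain ⟨x, hxV2, hnot⟩ := hfnp (fun x hx => by rw [hffd]; exact hfd1 x hx)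
      exact hnot (by rw [hffd]; exact hfd2 x hxV2)
    obtain ⟨a, haV1, hane⟩ := hfmne
    set b : V := fm a with hbdef
    have hbV2 : b ∈ V2 := hfm12 a haV1
    have haneV : a ≠ 0 := fun h => hane (by rw [hbdef, h, map_zero])
    -- Step 1 : rk ω a b ∈ W
    have hrab : rk ω a b ∈ W := by
      obtain ⟨hsp, hp1, hp2⟩ := hD1 a haV1 a haV1
      have hbrW : ⁅rk ω a a, fm⁆ ∈ W := hW3 _ hsp hp1 hp2 fm hfmW
      rw [bracketA hAlt hcompl horth hNd1 haV1 haV1 hfmsp hfm12 hfm21] at hbrW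
      have h2 : rk ω a b + rk ω a b ∈ W := (neg_mem_iff).1 hbrW
      rw [← two_smul K] at h2
      exact hscal 2 _ two_ne_zero h2
    -- Step 2 : ∀ w ∈ V2, rk ω a w ∈ W
    obtain ⟨w', hw'V2, hw'ne⟩ := hnd2' b hbV2 hane
    have key : ∀ w ∈ V2, (ω b w') • rk ω a w + (ω b w) • rk ω a w' ∈ W := by
      intro w hwV2
      obtain ⟨hsp, hp1, hp2⟩ := hD2 w hwV2 w' hw'V2
      have hbrW : ⁅rk ω w w', rk ω a b⁆ ∈ W := hW3 _ hsp hp1 hp2 _ hrab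
      rw [bracketB hAlt hcompl horth hNd1 hwV2 hw'V2 (rk_sp ω hAlt a b)
        (rk_maps12 hAlt horth haV1 hbV2) (rk_maps21 horth haV1 hbV2)] at hbrW
      have e1 : rk ω a b w' = (ω b w') • a := by
        rw [rk_apply, horth a haV1 w' hw'V2, zero_smul, add_zero]
      have e2 : rk ω a b w = (ω b w) • a := by
        rw [rk_apply, horth a haV1 w hwV2, zero_smul, add_zero]
      rw [e1, e2, rk_smul_left, rk_smul_left] at hbrW
      exact (neg_mem_iff).1 hbrW
    have hraw' : rk ω a w' ∈ W := by
      have h := key w' hw'V2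
      rw [← add_smul] at h
      exact hscal _ _ (by
        intro hz
        rw [← two_mul] at hz
        exact hw'ne (by
          have := mul_eq_zero.1 hz
          rcases this with h' | h'
          · exact absurd h' two_ne_zero
          · exact h')) h
    have hraw : ∀ w ∈ V2, rk ω a w ∈ W := by
      intro w hwV2
      have h := key w hwV2
      have h' : (ω b w') • rk ω a w ∈ W := by
        have := Submodule.sub_mem W h (Submodule.smul_mem W (ω b w) hraw')
        simpa using this
      exact hscal _ _ hw'ne h'
    -- Step 3 : ∀ u ∈ V1, ∀ w ∈ V2, rk ω u w ∈ W
    obtain ⟨u'', hu''V1, hu''ne⟩ := hnd1' a haV1 haneV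
    have key2 : ∀ u ∈ V1, ∀ w ∈ V2,
        (ω a u'') • rk ω u w + (ω a u) • rk ω u'' w ∈ W := by
      intro u huV1 w hwV2
      obtain ⟨hsp, hp1, hp2⟩ := hD1 u huV1 u'' hu''V1
      have hbrW : ⁅rk ω u u'', rk ω a w⁆ ∈ W := hW3 _ hsp hp1 hp2 _ (hraw w hwV2)
      rw [bracketA hAlt hcompl horth hNd1 huV1 hu''V1 (rk_sp ω hAlt a w)
        (rk_maps12 hAlt horth haV1 hwV2) (rk_maps21 horth haV1 hwV2)] at hbrW
      have e1 : rk ω a w u'' = (ω a u'') • w := by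
        rw [rk_apply, horth' hAlt horth w hwV2 u'' hu''V1, zero_smul, zero_add]
      have e2 : rk ω a w u = (ω a u) • w := by
        rw [rk_apply, horth' hAlt horth w hwV2 u huV1, zero_smul, zero_add]
      rw [e1, e2, rk_smul_right, rk_smul_right] at hbrW
      exact (neg_mem_iff).1 hbrW
    have hru''w : ∀ w ∈ V2, rk ω u'' w ∈ W := by
      intro w hwV2
      have h := key2 u'' hu''V1 w hwV2
      rw [← add_smul, ← two_mul] at h
      exact hscal _ _ (mul_ne_zero two_ne_zero hu''ne) h
    have hruw : ∀ u ∈ V1, ∀ w ∈ V2, rk ω u w ∈ W := by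
      intro u huV1 w hwV2
      have h := key2 u huV1 w hwV2
      have h' : (ω a u'') • rk ω u w ∈ W := by
        have := Submodule.sub_mem W h (Submodule.smul_mem W (ω a u) (hru''w w hwV2))
        simpa using this
      exact hscal _ _ hu''ne h'
    -- conclusion
    intro g
    refine ⟨fun h => hW1 g h, fun hgsp => ?_⟩
    have hgsp' := (mem_sp_iff ω g).1 hgsp
    obtain ⟨gd, gm, hgdm, hgdsp, hgd1, hgd2, hgmsp, hgm12, hgm21⟩ :=
      decomp hAlt hcompl horth hgsp'
    have hgdW : gd ∈ W := hW2 gd ((mem_sp_iff ω gd).2 hgdsp) hgd1 hgd2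
    have hgmW : gm ∈ W :=
      offdiag_mem hAlt hcompl horth hNd1 hruw hgmsp hgm12 hgm21
    rw [hgdm]
    exact Submodule.add_mem _ hgdW hgmW
end

section
/- Let 𝔥 ⊆ sp(V,ω) be the Lie subalgebra of elements preserving both V1 and V2. Then every Lie subalgebra 𝔤 of sp(V,ω) that contains 𝔥 satisfies 𝔤 = 𝔥 or 𝔤 = sp(V,ω). In other words, 𝔥 is a maximal Lie subalgebra of sp(V,ω). -/
/-!
STATEMENT 1.  Setting as before: `K` a field of characteristic zero, `V` a
finite-dimensional `K`-vector space, `ω` a nondegenerate alternating bilinear form,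
`V = V1 ⊕ V2` with `V1, V2` nonzero, `ω`-orthogonal, `ω` nondegenerate on each `Vi`.
`sp(V,ω)` is `skewAdjointLieSubalgebra ω`, and `𝔥` is the Lie subalgebra of elements
of `sp(V,ω)` preserving both `V1` and `V2`.

Claim: every Lie subalgebra `𝔤` of `sp(V,ω)` containing `𝔥` is `𝔥` or `sp(V,ω)`,
i.e. `𝔥` is a maximal Lie subalgebra of `sp(V,ω)`.
-/
attribute [local instance 100] LieRing.ofAssociativeRing

section aux
variable {K : Type*} [Field K] {V : Type*} [AddCommGroup V] [Module K V]
variable (ω : LinearMap.BilinForm K V)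

/-- The elementary "symplectic transvection-like" endomorphism. -/
noncomputable def sympT (u w : V) : Module.End K V :=
  (ω u).smulRight w + (ω w).smulRight u

lemma sympT_apply (u w z : V) : sympT ω u w z = ω u z • w + ω w z • u := rfl

lemma mem_sp_iff (f : Module.End K V) :
    f ∈ skewAdjointLieSubalgebra ω ↔ ∀ x y, ω (f x) y + ω x (f y) = 0 := by
  change f ∈ ω.skewAdjointSubmodule ↔ _
  rw [LinearMap.mem_skewAdjointSubmodule]
  constructor
  · intro h x y
    have := h (x := x) (y := y)
    simp only [LinearMap.neg_apply, Pi.neg_apply, map_neg] at this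
    linear_combination this
  · intro h x y
    have := h x y
    simp only [LinearMap.neg_apply, Pi.neg_apply, map_neg]
    linear_combination this

variable {ω}

lemma sympT_mem_sp (hAlt : ω.IsAlt) (u w : V) : sympT ω u w ∈ skewAdjointLieSubalgebra ω := by
  rw [mem_sp_iff]
  intro x y
  simp only [sympT_apply, map_add, map_smul, LinearMap.add_apply, LinearMap.smul_apply,
    smul_eq_mul]
  have h1 : ω x w = -ω w x := (hAlt.neg_eq w x).symm
  have h2 : ω x u = -ω u x := (hAlt.neg_eq u x).symm
  rw [h1, h2]; ring

lemma lie_sympT {A : Module.End K V} (hA : A ∈ skewAdjointLieSubalgebra ω) (u w : V) :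
    ⁅A, sympT ω u w⁆ = sympT ω (A u) w + sympT ω u (A w) := by
  rw [mem_sp_iff] at hA
  ext z
  have h1 : ω u (A z) = -ω (A u) z := by linear_combination hA u z
  have h2 : ω w (A z) = -ω (A w) z := by linear_combination hA w z
  simp only [LieRing.of_associative_ring_bracket, LinearMap.sub_apply, Module.End.mul_apply,
    sympT_apply, LinearMap.add_apply, map_add, map_smul, sympT_apply]
  rw [h1, h2]
  module

end aux

section aux2
variable {K : Type*} [Field K] [CharZero K] {V : Type*} [AddCommGroup V] [Module K V]
variable {ω : LinearMap.BilinForm K V}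

lemma exists_move (hAlt : ω.IsAlt) (W W' : Submodule K V)
    (hNdW : (ω.restrict W).Nondegenerate)
    (horthW : ∀ x ∈ W, ∀ y ∈ W', ω x y = 0)
    {x0 : V} (hx0 : x0 ∈ W) (hx0ne : x0 ≠ 0) {u : V} (hu : u ∈ W) :
    ∃ A : Module.End K V, A ∈ skewAdjointLieSubalgebra ω ∧ (∀ x ∈ W, A x ∈ W) ∧
      (∀ x ∈ W', A x = 0) ∧ A x0 = u := by
  -- find b ∈ W with ω b x0 ≠ 0
  have hne : ¬ ∀ n : W, ω.restrict W ⟨x0, hx0⟩ n = 0 := by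
    intro h
    have := hNdW.1 ⟨x0, hx0⟩ h
    exact hx0ne (by simpa [Subtype.ext_iff] using this)
  push_neg at hne
  obtain ⟨n, hn⟩ := hne
  set b : V := (n : V) with hbdef
  have hbW : b ∈ W := n.2
  have hc : ω b x0 ≠ 0 := by
    have h1 : ω x0 b ≠ 0 := by simpa [LinearMap.BilinForm.restrict_apply] using hn
    intro h
    apply h1
    have := hAlt.neg_eq b x0
    linear_combination -this - h
  set c : K := ω b x0 with hcdef
  refine ⟨c⁻¹ • sympT ω b u + (-(c⁻¹ * c⁻¹ * ω u x0)/2) • sympT ω b b, ?_, ?_, ?_, ?_⟩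
  · exact (skewAdjointLieSubalgebra ω).add_mem
      ((skewAdjointLieSubalgebra ω).smul_mem _ (sympT_mem_sp hAlt b u))
      ((skewAdjointLieSubalgebra ω).smul_mem _ (sympT_mem_sp hAlt b b))
  · intro x hx
    simp only [LinearMap.add_apply, LinearMap.smul_apply, sympT_apply]
    exact add_mem (Submodule.smul_mem _ _ (add_mem (Submodule.smul_mem _ _ hu)
        (Submodule.smul_mem _ _ hbW)))
      (Submodule.smul_mem _ _ (add_mem (Submodule.smul_mem _ _ hbW)
        (Submodule.smul_mem _ _ hbW)))
  · intro x hx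
    have h1 : ω b x = 0 := horthW b hbW x hx
    have h2 : ω u x = 0 := horthW u hu x hx
    simp [LinearMap.add_apply, LinearMap.smul_apply, sympT_apply, h1, h2]
  · simp only [LinearMap.add_apply, LinearMap.smul_apply, sympT_apply, ← hcdef]
    have h2 : (2:K) ≠ 0 := two_ne_zero
    match_scalars
    · field_simp
    · field_simp
      ring

end aux2

section aux3
variable {K : Type*} [Field K] {V : Type*} [AddCommGroup V] [Module K V]
variable {ω : LinearMap.BilinForm K V}

lemma horth_flip (hAlt : ω.IsAlt) {V1 V2 : Submodule K V}
    (horth : ∀ x ∈ V1, ∀ y ∈ V2, ω x y = 0) :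
    ∀ x ∈ V2, ∀ y ∈ V1, ω x y = 0 := by
  intro x hx y hy
  rw [← hAlt.neg_eq y x, horth y hy x hx, neg_zero]

lemma offdiag_mem_sp (hAlt : ω.IsAlt) {V1 V2 : Submodule K V}
    (horth : ∀ x ∈ V1, ∀ y ∈ V2, ω x y = 0)
    {pr1 pr2 : Module.End K V}
    (hpr1 : ∀ x, pr1 x ∈ V1) (hpr2 : ∀ x, pr2 x ∈ V2)
    (hsum : ∀ x, pr1 x + pr2 x = x)
    {f : Module.End K V} (hf : f ∈ skewAdjointLieSubalgebra ω) :
    pr1 * f * pr2 + pr2 * f * pr1 ∈ skewAdjointLieSubalgebra ω := by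
  have horth' := horth_flip hAlt horth
  rw [mem_sp_iff] at hf ⊢
  have key1 : ∀ s t, t ∈ V1 → ω (pr1 s) t = ω s t := by
    intro s t ht
    conv_rhs => rw [← hsum s]
    rw [map_add, LinearMap.add_apply, horth' _ (hpr2 s) t ht, add_zero]
  have key2 : ∀ s t, t ∈ V2 → ω (pr2 s) t = ω s t := by
    intro s t ht
    conv_rhs => rw [← hsum s]
    rw [map_add, LinearMap.add_apply, horth _ (hpr1 s) t ht, zero_add]
  have key1' : ∀ s t, s ∈ V1 → ω s (pr1 t) = ω s t := by
    intro s t hs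
    conv_rhs => rw [← hsum t]
    rw [map_add, horth s hs _ (hpr2 t), add_zero]
  have key2' : ∀ s t, s ∈ V2 → ω s (pr2 t) = ω s t := by
    intro s t hs
    conv_rhs => rw [← hsum t]
    rw [map_add, horth' s hs _ (hpr1 t), zero_add]
  intro x y
  have e1 : ω (pr1 (f (pr2 x))) y = ω (f (pr2 x)) (pr1 y) := by
    conv_lhs => rw [← hsum y]
    rw [map_add, horth _ (hpr1 _) _ (hpr2 y), add_zero]
    exact key1 _ _ (hpr1 y)
  have e2 : ω (pr2 (f (pr1 x))) y = ω (f (pr1 x)) (pr2 y) := by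
    conv_lhs => rw [← hsum y]
    rw [map_add, horth' _ (hpr2 _) _ (hpr1 y), zero_add]
    exact key2 _ _ (hpr2 y)
  have e3 : ω x (pr1 (f (pr2 y))) = ω (pr1 x) (f (pr2 y)) := by
    conv_lhs => rw [← hsum x]
    rw [map_add, LinearMap.add_apply, horth' _ (hpr2 x) _ (hpr1 _), add_zero]
    exact key1' _ _ (hpr1 x)
  have e4 : ω x (pr2 (f (pr1 y))) = ω (pr2 x) (f (pr1 y)) := by
    conv_lhs => rw [← hsum x]
    rw [map_add, LinearMap.add_apply, horth _ (hpr1 x) _ (hpr2 _), zero_add]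
    exact key2' _ _ (hpr2 x)
  simp only [LinearMap.add_apply, Module.End.mul_apply, map_add]
  linear_combination e1 + e2 + e3 + e4 + hf (pr2 x) (pr1 y) + hf (pr1 x) (pr2 y)

end aux3

section aux4
variable {K : Type*} [Field K] {V : Type*} [AddCommGroup V] [Module K V]
  [FiniteDimensional K V]
variable {ω : LinearMap.BilinForm K V}

lemma offdiag_eq_sum_sympT (hAlt : ω.IsAlt) {V1 V2 : Submodule K V}
    (horth : ∀ x ∈ V1, ∀ y ∈ V2, ω x y = 0)
    (hNd2 : (ω.restrict V2).Nondegenerate)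
    {pr1 pr2 : Module.End K V}
    (hpr1 : ∀ x, pr1 x ∈ V1) (hpr2 : ∀ x, pr2 x ∈ V2)
    (hsum : ∀ x, pr1 x + pr2 x = x)
    {m : Module.End K V} (hm : m ∈ skewAdjointLieSubalgebra ω)
    (hm1 : ∀ x ∈ V1, m x ∈ V2) (hm2 : ∀ x ∈ V2, m x ∈ V1) :
    ∃ (ι : Type) (_ : Fintype ι) (uu ww : ι → V), (∀ i, uu i ∈ V1) ∧ (∀ i, ww i ∈ V2) ∧
      m = ∑ i, sympT ω (uu i) (ww i) := by
  have horth' := horth_flip hAlt horth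
  rw [mem_sp_iff] at hm
  set b : Module.Basis (Fin (Module.finrank K V2)) K V2 := Module.finBasis K V2 with hb
  set d : Module.Basis (Fin (Module.finrank K V2)) K V2 :=
    (ω.restrict V2).dualBasis hNd2 b with hd
  have hdual : ∀ i j, ω (d i) (b j) = if j = i then 1 else 0 := by
    intro i j
    have := (ω.restrict V2).apply_dualBasis_left hNd2 b i j
    simpa [LinearMap.BilinForm.restrict_apply] using this
  have hrepr : ∀ z : V2, (z : V) = ∑ i, ω (d i) z • (b i : V) := by
    intro z
    have hco : ∀ i, ω (d i) (z : V) = b.repr z i := by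
      intro i
      conv_lhs => rw [show (z : V) = ((∑ j, b.repr z j • b j : V2) : V) by rw [b.sum_repr z]]
      push_cast
      rw [map_sum]
      simp only [map_smul, smul_eq_mul, hdual]
      simp
    conv_lhs => rw [show (z : V) = ((∑ j, b.repr z j • b j : V2) : V) by rw [b.sum_repr z]]
    push_cast
    simp only [hco]
  refine ⟨Fin (Module.finrank K V2), inferInstance, fun i => m (b i), fun i => (d i : V),
    fun i => hm2 _ (b i).2, fun i => (d i).2, ?_⟩
  -- claim on V2
  have claim2 : ∀ z ∈ V2, m z = ∑ i, sympT ω (m (b i)) (d i) z := by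
    intro z hz
    have h0 : ∀ i, ω (m (b i)) z = 0 := fun i => horth _ (hm2 _ (b i).2) z hz
    simp only [sympT_apply, h0, zero_smul, zero_add]
    have : m z = m (∑ i, ω (d i) z • (b i : V)) := by rw [← hrepr ⟨z, hz⟩]
    rw [this, map_sum]
    simp only [map_smul]
  -- claim on V1
  have claim1 : ∀ z ∈ V1, m z = ∑ i, sympT ω (m (b i)) (d i) z := by
    intro z hz
    have h0 : ∀ i, ω (d i : V) z = 0 := fun i => horth' _ (d i).2 z hz
    simp only [sympT_apply, h0, zero_smul, add_zero]
    -- show the difference is killed by ω against all of V2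
    have hxV2 : m z - ∑ i, ω (m (b i)) z • (d i : V) ∈ V2 :=
      Submodule.sub_mem _ (hm1 z hz)
        (Submodule.sum_mem _ fun i _ => Submodule.smul_mem _ _ (d i).2)
    have hkill : ∀ y ∈ V2, ω (m z - ∑ i, ω (m (b i)) z • (d i : V)) y = 0 := by
      intro y hy
      have hy1 : ω (m z) y = -ω z (m y) := by linear_combination hm z y
      have hmy : m y = ∑ i, ω (d i) y • m (b i : V) := by
        conv_lhs => rw [show y = ((⟨y, hy⟩ : V2) : V) from rfl, hrepr ⟨y, hy⟩]
        rw [map_sum]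
        simp only [map_smul]
      have hexp : ω z (m y) = ∑ i, ω (d i) y * ω z (m (b i)) := by
        rw [hmy, map_sum]
        simp only [map_smul, smul_eq_mul]
      have hsum0 : ∑ i, (ω (d i) y * ω z (m (b i)) + ω (m (b i)) z * ω (d i) y) = 0 :=
        Finset.sum_eq_zero fun i _ => by
          linear_combination (-(ω (d i) y)) * (hAlt.neg_eq (m (b i)) z)
      rw [Finset.sum_add_distrib] at hsum0
      simp only [map_sub, map_sum, map_smul, LinearMap.sub_apply, LinearMap.coe_sum,
        Finset.sum_apply, LinearMap.smul_apply, smul_eq_mul]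
      linear_combination hy1 - hexp - hsum0
    have := hNd2.1 ⟨_, hxV2⟩ (fun n => by
      have h := hkill (n : V) n.2
      simpa [LinearMap.BilinForm.restrict_apply] using h)
    have hzero : m z - ∑ i, ω (m (b i)) z • (d i : V) = 0 := by
      simpa [Subtype.ext_iff] using this
    exact sub_eq_zero.mp hzero
  ext z
  have h1 := claim1 (pr1 z) (hpr1 z)
  have h2 := claim2 (pr2 z) (hpr2 z)
  have hmz : m z = m (pr1 z) + m (pr2 z) := by rw [← map_add, hsum z]
  rw [hmz, h1, h2, ← Finset.sum_add_distrib]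
  simp only [LinearMap.coe_sum, Finset.sum_apply]
  exact Finset.sum_congr rfl fun i _ => by rw [← map_add, hsum z]

end aux4


theorem block_diagonal_subalgebra_is_maximal_in_sp
    {K : Type*} [Field K] [CharZero K]
    {V : Type*} [AddCommGroup V] [Module K V] [FiniteDimensional K V]
    (ω : LinearMap.BilinForm K V) (hAlt : ω.IsAlt) (hNd : ω.Nondegenerate)
    (V1 V2 : Submodule K V) (h1 : V1 ≠ ⊥) (h2 : V2 ≠ ⊥) (hcompl : IsCompl V1 V2)
    (horth : ∀ x ∈ V1, ∀ y ∈ V2, ω x y = 0)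
    (hNd1 : (ω.restrict V1).Nondegenerate) (hNd2 : (ω.restrict V2).Nondegenerate) :
    ∀ g : LieSubalgebra K (Module.End K V),
      -- `g` is a Lie subalgebra of `sp(V,ω)`:
      g ≤ skewAdjointLieSubalgebra ω →
      -- `g` contains `𝔥`:
      (∀ f ∈ skewAdjointLieSubalgebra ω,
        (∀ x ∈ V1, f x ∈ V1) → (∀ x ∈ V2, f x ∈ V2) → f ∈ g) →
      -- conclusion: `g = 𝔥` or `g = sp(V,ω)`:
      ((∀ f, f ∈ g ↔ f ∈ skewAdjointLieSubalgebra ω ∧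
            (∀ x ∈ V1, f x ∈ V1) ∧ (∀ x ∈ V2, f x ∈ V2)) ∨
       g = skewAdjointLieSubalgebra ω) := by
  intro g hle hg
  by_cases hcase : ∀ f ∈ g, (∀ x ∈ V1, f x ∈ V1) ∧ (∀ x ∈ V2, f x ∈ V2)
  · left
    intro f
    exact ⟨fun hf => ⟨hle hf, (hcase f hf).1, (hcase f hf).2⟩,
      fun ⟨ha, hb, hc⟩ => hg f ha hb hc⟩
  · right
    push_neg at hcase
    obtain ⟨f0, hf0g, hf0n⟩ := hcase
    have horth' := horth_flip hAlt horth
    -- projections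
    set pr1 : Module.End K V := V1.subtype ∘ₗ V1.linearProjOfIsCompl V2 hcompl with hpr1def
    set pr2 : Module.End K V := V2.subtype ∘ₗ V2.linearProjOfIsCompl V1 hcompl.symm with hpr2def
    have hpr1 : ∀ x, pr1 x ∈ V1 := fun x => (V1.linearProjOfIsCompl V2 hcompl x).2
    have hpr2 : ∀ x, pr2 x ∈ V2 := fun x => (V2.linearProjOfIsCompl V1 hcompl.symm x).2
    have hsum : ∀ x, pr1 x + pr2 x = x := fun x =>
      Submodule.projection_add_projection_eq_self hcompl x
    have hpr1id : ∀ x ∈ V1, pr1 x = x := fun x hx => by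
      exact congrArg (Subtype.val)
        (Submodule.linearProjOfIsCompl_apply_left hcompl ⟨x, hx⟩)
    have hpr2id : ∀ x ∈ V2, pr2 x = x := fun x hx => by
      exact congrArg (Subtype.val)
        (Submodule.linearProjOfIsCompl_apply_left hcompl.symm ⟨x, hx⟩)
    have hpr2zero : ∀ x ∈ V1, pr2 x = 0 := fun x hx => by
      have h := hsum x; rw [hpr1id x hx] at h
      rwa [add_eq_left] at h
    have hpr1zero : ∀ x ∈ V2, pr1 x = 0 := fun x hx => by
      have h := hsum x; rw [hpr2id x hx] at h
      rwa [add_eq_right] at h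
    -- general facts about the off-diagonal / diagonal parts
    have hoff : ∀ f ∈ skewAdjointLieSubalgebra ω,
        pr1*f*pr2 + pr2*f*pr1 ∈ skewAdjointLieSubalgebra ω := fun f hf =>
      offdiag_mem_sp hAlt horth hpr1 hpr2 hsum hf
    have hm1 : ∀ f : Module.End K V, ∀ x ∈ V1, (pr1*f*pr2 + pr2*f*pr1) x ∈ V2 := by
      intro f x hx
      simp only [LinearMap.add_apply, Module.End.mul_apply, hpr2zero x hx, hpr1id x hx,
        map_zero, zero_add]
      exact hpr2 _
    have hm2 : ∀ f : Module.End K V, ∀ x ∈ V2, (pr1*f*pr2 + pr2*f*pr1) x ∈ V1 := by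
      intro f x hx
      simp only [LinearMap.add_apply, Module.End.mul_apply, hpr1zero x hx, hpr2id x hx,
        map_zero, add_zero]
      exact hpr1 _
    have hdiag_eq1 : ∀ f : Module.End K V, ∀ x ∈ V1,
        (f - (pr1*f*pr2 + pr2*f*pr1)) x = pr1 (f x) := by
      intro f x hx
      simp only [LinearMap.sub_apply, LinearMap.add_apply, Module.End.mul_apply,
        hpr2zero x hx, hpr1id x hx, map_zero, zero_add]
      exact sub_eq_of_eq_add (hsum (f x)).symm
    have hdiag_eq2 : ∀ f : Module.End K V, ∀ x ∈ V2,
        (f - (pr1*f*pr2 + pr2*f*pr1)) x = pr2 (f x) := by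
      intro f x hx
      simp only [LinearMap.sub_apply, LinearMap.add_apply, Module.End.mul_apply,
        hpr1zero x hx, hpr2id x hx, map_zero, add_zero]
      exact sub_eq_of_eq_add' (hsum (f x)).symm
    have hdiag_sp : ∀ f ∈ skewAdjointLieSubalgebra ω,
        f - (pr1*f*pr2 + pr2*f*pr1) ∈ skewAdjointLieSubalgebra ω := by
      intro f hf
      have h1' := mem_sp_iff ω f |>.mp hf
      have h2' := mem_sp_iff ω _ |>.mp (hoff f hf)
      rw [mem_sp_iff]
      intro x y
      simp only [LinearMap.sub_apply, map_sub]
      linear_combination h1' x y - h2' x y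
    have hdiag_g : ∀ f ∈ skewAdjointLieSubalgebra ω,
        f - (pr1*f*pr2 + pr2*f*pr1) ∈ g := fun f hf =>
      hg _ (hdiag_sp f hf)
        (fun x hx => by rw [hdiag_eq1 f x hx]; exact hpr1 _)
        (fun x hx => by rw [hdiag_eq2 f x hx]; exact hpr2 _)
    have hsub_mem : ∀ a b : Module.End K V, a ∈ g → b ∈ g → a - b ∈ g := by
      intro a b ha hb
      have := g.add_mem ha (g.smul_mem (-1 : K) hb)
      simpa [neg_one_smul, sub_eq_add_neg] using this
    -- the off-diagonal part of f0
    set m : Module.End K V := pr1*f0*pr2 + pr2*f0*pr1 with hmdef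
    have hmsp : m ∈ skewAdjointLieSubalgebra ω := hoff f0 (hle hf0g)
    have hmg : m ∈ g := by
      have : m = f0 - (f0 - m) := by abel
      rw [this]
      exact hsub_mem _ _ hf0g (hdiag_g f0 (hle hf0g))
    have hmsp' := mem_sp_iff ω m |>.mp hmsp
    have hmne : m ≠ 0 := by
      intro h
      have hA : ∀ x ∈ V1, f0 x ∈ V1 := by
        intro x hx
        have := hdiag_eq1 f0 x hx
        rw [← hmdef, h, sub_zero] at this
        rw [this]; exact hpr1 _
      obtain ⟨x, hx, hnx⟩ := hf0n hA
      apply hnx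
      have := hdiag_eq2 f0 x hx
      rw [← hmdef, h, sub_zero] at this
      rw [this]; exact hpr2 _
    -- find y0 ∈ V2 with m y0 ≠ 0
    have hy0 : ∃ y0 ∈ V2, m y0 ≠ 0 := by
      have hz : ∃ z, m z ≠ 0 := by
        by_contra h; push_neg at h
        exact hmne (LinearMap.ext fun z => by simp [h z])
      obtain ⟨z, hz⟩ := hz
      by_cases hc2 : m (pr2 z) ≠ 0
      · exact ⟨pr2 z, hpr2 z, hc2⟩
      · push_neg at hc2
        have hc1 : m (pr1 z) ≠ 0 := by
          intro h
          apply hz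
          conv_lhs => rw [← hsum z]
          rw [map_add, h, hc2, add_zero]
        -- m (pr1 z) ∈ V2 and is nonzero; pair it nontrivially with some y ∈ V2
        have hw2 : m (pr1 z) ∈ V2 := hm1 f0 _ (hpr1 z)
        have hne : ¬ ∀ n : V2, ω.restrict V2 ⟨m (pr1 z), hw2⟩ n = 0 := by
          intro h
          have := hNd2.1 ⟨m (pr1 z), hw2⟩ h
          exact hc1 (by simpa [Subtype.ext_iff] using this)
        push_neg at hne
        obtain ⟨n, hn⟩ := hne
        refine ⟨(n : V), n.2, ?_⟩
        intro h
        apply hn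
        have := hmsp' (pr1 z) (n : V)
        rw [h, map_zero] at this
        simpa [LinearMap.BilinForm.restrict_apply] using this
    obtain ⟨y0, hy0V2, hmy0⟩ := hy0
    set x0 : V := m y0 with hx0def
    have hx0V1 : x0 ∈ V1 := hm2 f0 y0 hy0V2
    have hx0ne : x0 ≠ 0 := hmy0
    have hy0ne : y0 ≠ 0 := fun h => hx0ne (by rw [hx0def, h, map_zero])
    -- Step 1: sympT ω x0 y0 ∈ g
    set S : Module.End K V := sympT ω y0 y0 with hSdef
    have hSg : S ∈ g := by
      refine hg S (sympT_mem_sp hAlt y0 y0) ?_ ?_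
      · intro x hx
        rw [hSdef]
        rw [show sympT ω y0 y0 x = ω y0 x • y0 + ω y0 x • y0 from rfl,
          horth' y0 hy0V2 x hx]
        simp
      · intro x hx
        rw [hSdef, show sympT ω y0 y0 x = ω y0 x • y0 + ω y0 x • y0 from rfl]
        exact add_mem (Submodule.smul_mem _ _ hy0V2) (Submodule.smul_mem _ _ hy0V2)
    have hbr : ⁅S, m⁆ = (-2 : K) • sympT ω x0 y0 := by
      have c1 : ∀ z ∈ V1, ⁅S, m⁆ z = ((-2 : K) • sympT ω x0 y0) z := by
        intro z hz
        have hSz : S z = 0 := by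
          rw [hSdef, show sympT ω y0 y0 z = ω y0 z • y0 + ω y0 z • y0 from rfl,
            horth' y0 hy0V2 z hz]
          simp
        have hωmz : ω y0 (m z) = -ω x0 z := by linear_combination hmsp' y0 z
        rw [show ⁅S, m⁆ z = S (m z) - m (S z) from rfl, hSz, map_zero, sub_zero]
        rw [hSdef, show sympT ω y0 y0 (m z) = ω y0 (m z) • y0 + ω y0 (m z) • y0 from rfl,
          hωmz]
        rw [LinearMap.smul_apply, show sympT ω x0 y0 z = ω x0 z • y0 + ω y0 z • x0 from rfl,
          horth' y0 hy0V2 z hz]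
        module
      have c2 : ∀ z ∈ V2, ⁅S, m⁆ z = ((-2 : K) • sympT ω x0 y0) z := by
        intro z hz
        have hSmz : S (m z) = 0 := by
          rw [hSdef, show sympT ω y0 y0 (m z) = ω y0 (m z) • y0 + ω y0 (m z) • y0 from rfl,
            horth' y0 hy0V2 (m z) (hm2 f0 z hz)]
          simp
        rw [show ⁅S, m⁆ z = S (m z) - m (S z) from rfl, hSmz, zero_sub]
        rw [hSdef, show sympT ω y0 y0 z = ω y0 z • y0 + ω y0 z • y0 from rfl]
        simp only [map_add, map_smul]
        rw [← hx0def]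
        rw [LinearMap.smul_apply, show sympT ω x0 y0 z = ω x0 z • y0 + ω y0 z • x0 from rfl,
          horth x0 hx0V1 z hz]
        module
      ext z
      have := hsum z
      calc ⁅S, m⁆ z = ⁅S, m⁆ (pr1 z + pr2 z) := by rw [hsum z]
        _ = ⁅S, m⁆ (pr1 z) + ⁅S, m⁆ (pr2 z) := map_add _ _ _
        _ = ((-2 : K) • sympT ω x0 y0) (pr1 z) + ((-2 : K) • sympT ω x0 y0) (pr2 z) := by
            rw [c1 _ (hpr1 z), c2 _ (hpr2 z)]
        _ = ((-2 : K) • sympT ω x0 y0) z := by rw [← map_add, hsum z]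
    have hT0 : sympT ω x0 y0 ∈ g := by
      have hbm : ⁅S, m⁆ ∈ g := g.lie_mem hSg hmg
      have heq : sympT ω x0 y0 = (-2 : K)⁻¹ • ⁅S, m⁆ := by
        rw [hbr, smul_smul]
        norm_num
      rw [heq]
      exact g.smul_mem _ hbm
    -- Step 2
    have hT1 : ∀ u ∈ V1, sympT ω u y0 ∈ g := by
      intro u hu
      obtain ⟨A, hAsp, hA1, hA0, hAx0⟩ := exists_move hAlt V1 V2 hNd1 horth hx0V1 hx0ne hu
      have hAg : A ∈ g := hg A hAsp hA1 (fun x hx => by rw [hA0 x hx]; exact V2.zero_mem)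
      have hB := lie_sympT hAsp x0 y0
      rw [hAx0, hA0 y0 hy0V2] at hB
      have h0 : sympT ω x0 (0:V) = 0 := by ext z; simp [sympT_apply]
      rw [h0, add_zero] at hB
      rw [← hB]
      exact g.lie_mem hAg hT0
    -- Step 3
    have hTall : ∀ u ∈ V1, ∀ w ∈ V2, sympT ω u w ∈ g := by
      intro u hu w hw
      obtain ⟨B, hBsp, hB2, hB0, hBy0⟩ := exists_move hAlt V2 V1 hNd2 horth' hy0V2 hy0ne hw
      have hBg : B ∈ g := hg B hBsp (fun x hx => by rw [hB0 x hx]; exact V1.zero_mem) hB2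
      have hB := lie_sympT hBsp u y0
      rw [hBy0, hB0 u hu] at hB
      have h0 : sympT ω (0:V) y0 = 0 := by ext z; simp [sympT_apply]
      rw [h0, zero_add] at hB
      rw [← hB]
      exact g.lie_mem hBg (hT1 u hu)
    -- conclude: sp ≤ g
    refine le_antisymm hle ?_
    intro f hf
    obtain ⟨ι, _, uu, ww, huu, hww, heq⟩ :=
      offdiag_eq_sum_sympT hAlt horth hNd2 hpr1 hpr2 hsum (hoff f hf) (hm1 f) (hm2 f)
    have hmg' : pr1*f*pr2 + pr2*f*pr1 ∈ g := by
      rw [heq]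
      exact Submodule.sum_mem (g : Submodule K (Module.End K V))
        fun i _ => hTall (uu i) (huu i) (ww i) (hww i)
    have hfd : f = (f - (pr1*f*pr2 + pr2*f*pr1)) + (pr1*f*pr2 + pr2*f*pr1) := by abel
    rw [hfd]
    exact g.add_mem (hdiag_g f hf) hmg'
end

section
/- Let W be a K-linear subspace of V such that g(W) ⊆ W for every K-linear automorphism g of V that preserves ω (i.e. ω(g x, g y) = ω(x, y) for all x, y) and satisfies g(V1) = V1 and g(V2) = V2. Then W is one of the four subspaces 0, V1, V2, or V. -/
section Aux
variable {K : Type*} [Field K] {V : Type*} [AddCommGroup V] [Module K V]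

/-- The symplectic transvection along `v`: `x ↦ x + ω x v • v`. -/
noncomputable def transvEquiv (ω : LinearMap.BilinForm K V) (hAlt : ω.IsAlt) (v : V) :
    V ≃ₗ[K] V :=
  LinearEquiv.ofLinear
    (LinearMap.id + LinearMap.smulRight (ω.flip v) v)
    (LinearMap.id - LinearMap.smulRight (ω.flip v) v)
    (by ext x; simp [hAlt v, smul_smul, sub_add, add_sub_cancel])
    (by ext x; simp [hAlt v, smul_smul])

@[simp] lemma transvEquiv_apply (ω : LinearMap.BilinForm K V) (hAlt : ω.IsAlt) (v x : V) :
    transvEquiv ω hAlt v x = x + ω x v • v := by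
  simp [transvEquiv]

lemma transvEquiv_symm_apply (ω : LinearMap.BilinForm K V) (hAlt : ω.IsAlt) (v x : V) :
    (transvEquiv ω hAlt v).symm x = x - ω x v • v := by
  simp [transvEquiv]

lemma transvEquiv_preserves (ω : LinearMap.BilinForm K V) (hAlt : ω.IsAlt) (v : V) :
    ∀ x y, ω (transvEquiv ω hAlt v x) (transvEquiv ω hAlt v y) = ω x y := by
  intro x y
  simp only [transvEquiv_apply, map_add, map_smul, LinearMap.add_apply, LinearMap.smul_apply,
    smul_eq_mul]
  rw [show ω v y = -(ω y v) from (LinearMap.IsAlt.neg hAlt y v).symm, hAlt v]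
  ring

/-- Key lemma: if `W` is stable under all transvections along vectors of `A`,
`ω` restricted to `A` is nondegenerate, and `W ⊓ A ≠ ⊥`, then `A ≤ W`. -/
lemma aux_trans (ω : LinearMap.BilinForm K V) (A : Submodule K V)
    (hNdA : (ω.restrict A).Nondegenerate)
    (W : Submodule K V)
    (hstab : ∀ v ∈ A, ∀ x ∈ W, x + ω x v • v ∈ W)
    (hne : W ⊓ A ≠ ⊥) : A ≤ W := by
  obtain ⟨u, hu, hu0⟩ := Submodule.exists_mem_ne_zero_of_ne_bot hne
  obtain ⟨huW, huA⟩ := hu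
  have hex : ∃ v ∈ A, ω u v ≠ 0 := by
    by_contra h
    push_neg at h
    apply hu0
    have h0 : (⟨u, huA⟩ : A) = 0 := hNdA.1 ⟨u, huA⟩ (fun n => by
      simpa [LinearMap.BilinForm.restrict_apply] using h n n.2)
    exact congrArg Subtype.val h0
  obtain ⟨v, hvA, hv⟩ := hex
  have key : ∀ x ∈ A, ω u x ≠ 0 → x ∈ W := by
    intro x hxA hx
    have h1 := hstab x hxA u huW
    have h2 : ω u x • x ∈ W := by simpa using W.sub_mem h1 huW
    have h3 := W.smul_mem (ω u x)⁻¹ h2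
    rwa [smul_smul, inv_mul_cancel₀ hx, one_smul] at h3
  intro x hxA
  by_cases hx : ω u x = 0
  · have hA1 : v + x ∈ W := key (v + x) (A.add_mem hvA hxA) (by simp [hx, hv])
    have hA2 : v ∈ W := key v hvA hv
    simpa using W.sub_mem hA1 hA2
  · exact key x hxA hx

end Aux

theorem invariant_subspaces_of_product_symplectic_group
    {K : Type*} [Field K] [CharZero K]
    {V : Type*} [AddCommGroup V] [Module K V] [FiniteDimensional K V]
    (ω : LinearMap.BilinForm K V) (hAlt : ω.IsAlt) (hNd : ω.Nondegenerate)
    (V1 V2 : Submodule K V) (h1 : V1 ≠ ⊥) (h2 : V2 ≠ ⊥) (hcompl : IsCompl V1 V2)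
    (horth : ∀ x ∈ V1, ∀ y ∈ V2, ω x y = 0)
    (hNd1 : (ω.restrict V1).Nondegenerate) (hNd2 : (ω.restrict V2).Nondegenerate)
    (W : Submodule K V)
    (hW : ∀ g : V ≃ₗ[K] V,
      (∀ x y, ω (g x) (g y) = ω x y) →
      Submodule.map (g : V →ₗ[K] V) V1 = V1 →
      Submodule.map (g : V →ₗ[K] V) V2 = V2 →
      ∀ x ∈ W, g x ∈ W) :
    W = ⊥ ∨ W = V1 ∨ W = V2 ∨ W = ⊤ := by
  have horth' : ∀ y ∈ V2, ∀ x ∈ V1, ω y x = 0 := by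
    intro y hy x hx
    have h := horth x hx y hy
    rw [← LinearMap.IsAlt.neg hAlt x y, h, neg_zero]
  -- stability under transvections along V1
  have hstab1 : ∀ v ∈ V1, ∀ x ∈ W, x + ω x v • v ∈ W := by
    intro v hv x hx
    have hmap1 : Submodule.map ((transvEquiv ω hAlt v) : V →ₗ[K] V) V1 = V1 := by
      apply le_antisymm
      · rintro _ ⟨y, hy, rfl⟩
        simpa using V1.add_mem hy (V1.smul_mem _ hv)
      · intro y hy
        refine ⟨(transvEquiv ω hAlt v).symm y, ?_, by simp⟩
        rw [transvEquiv_symm_apply]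
        exact V1.sub_mem hy (V1.smul_mem _ hv)
    have hmap2 : Submodule.map ((transvEquiv ω hAlt v) : V →ₗ[K] V) V2 = V2 := by
      have hfix : ∀ y ∈ V2, transvEquiv ω hAlt v y = y := by
        intro y hy
        rw [transvEquiv_apply]
        have : ω y v = 0 := horth' y hy v hv
        simp [this]
      apply le_antisymm
      · rintro _ ⟨y, hy, rfl⟩
        simpa [hfix y hy] using hy
      · intro y hy
        exact ⟨y, hy, hfix y hy⟩
    have := hW (transvEquiv ω hAlt v) (transvEquiv_preserves ω hAlt v) hmap1 hmap2 x hx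
    simpa using this
  -- stability under transvections along V2
  have hstab2 : ∀ v ∈ V2, ∀ x ∈ W, x + ω x v • v ∈ W := by
    intro v hv x hx
    have hmap2 : Submodule.map ((transvEquiv ω hAlt v) : V →ₗ[K] V) V2 = V2 := by
      apply le_antisymm
      · rintro _ ⟨y, hy, rfl⟩
        simpa using V2.add_mem hy (V2.smul_mem _ hv)
      · intro y hy
        refine ⟨(transvEquiv ω hAlt v).symm y, ?_, by simp⟩
        rw [transvEquiv_symm_apply]
        exact V2.sub_mem hy (V2.smul_mem _ hv)
    have hmap1 : Submodule.map ((transvEquiv ω hAlt v) : V →ₗ[K] V) V1 = V1 := by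
      have hfix : ∀ y ∈ V1, transvEquiv ω hAlt v y = y := by
        intro y hy
        rw [transvEquiv_apply]
        have : ω y v = 0 := horth y hy v hv
        simp [this]
      apply le_antisymm
      · rintro _ ⟨y, hy, rfl⟩
        simpa [hfix y hy] using hy
      · intro y hy
        exact ⟨y, hy, hfix y hy⟩
    have := hW (transvEquiv ω hAlt v) (transvEquiv_preserves ω hAlt v) hmap1 hmap2 x hx
    simpa using this
  -- the sign automorphism: -1 on V1, +1 on V2
  set π : V →ₗ[K] V1 := Submodule.projectionOnto V1 V2 hcompl with hπ
  set s : V →ₗ[K] V := LinearMap.id - (2 : K) • (V1.subtype ∘ₗ π) with hs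
  have hs_apply : ∀ x, s x = x - (2 : K) • (π x : V) := by intro x; simp [hs]
  have hs1 : ∀ x ∈ V1, s x = -x := by
    intro x hx
    rw [hs_apply, Submodule.projectionOnto_apply_left hcompl ⟨x, hx⟩]
    module
  have hs2 : ∀ x ∈ V2, s x = x := by
    intro x hx
    rw [hs_apply, Submodule.projectionOnto_apply_right hcompl ⟨x, hx⟩]
    simp
  have hdecomp : ∀ x : V, ∃ x1 ∈ V1, ∃ x2 ∈ V2, x = x1 + x2 := by
    intro x
    have : x ∈ V1 ⊔ V2 := by rw [hcompl.sup_eq_top]; trivial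
    obtain ⟨x1, hx1, x2, hx2, h⟩ := Submodule.mem_sup.1 this
    exact ⟨x1, hx1, x2, hx2, h.symm⟩
  have hsx : ∀ a ∈ V1, ∀ b ∈ V2, s (a + b) = -a + b := by
    intro a ha b hb
    rw [map_add, hs1 a ha, hs2 b hb]
  have hss : ∀ x, s (s x) = x := by
    intro x
    obtain ⟨x1, hx1, x2, hx2, rfl⟩ := hdecomp x
    rw [hsx x1 hx1 x2 hx2, map_add, map_neg, hs1 x1 hx1, hs2 x2 hx2, neg_neg]
  set e : V ≃ₗ[K] V := LinearEquiv.ofLinear s s (by ext x; exact hss x) (by ext x; exact hss x) with he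
  have he_apply : ∀ x, e x = s x := fun x => rfl
  have hepres : ∀ x y, ω (e x) (e y) = ω x y := by
    intro x y
    obtain ⟨x1, hx1, x2, hx2, rfl⟩ := hdecomp x
    obtain ⟨y1, hy1, y2, hy2, rfl⟩ := hdecomp y
    rw [he_apply, he_apply, hsx x1 hx1 x2 hx2, hsx y1 hy1 y2 hy2]
    simp only [map_add, map_neg, LinearMap.add_apply, LinearMap.neg_apply,
      horth x1 hx1 y2 hy2, horth' x2 hx2 y1 hy1]
    ring
  have hemap1 : Submodule.map (e : V →ₗ[K] V) V1 = V1 := by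
    apply le_antisymm
    · rintro _ ⟨y, hy, rfl⟩
      show s y ∈ V1
      rw [hs1 y hy]; exact V1.neg_mem hy
    · intro y hy
      exact ⟨-y, V1.neg_mem hy, by show s (-y) = y; rw [map_neg, hs1 y hy, neg_neg]⟩
  have hemap2 : Submodule.map (e : V →ₗ[K] V) V2 = V2 := by
    apply le_antisymm
    · rintro _ ⟨y, hy, rfl⟩
      show s y ∈ V2
      rw [hs2 y hy]; exact hy
    · intro y hy
      exact ⟨y, hy, hs2 y hy⟩
  -- splitting of W
  have hsplit : ∀ w ∈ W, (π w : V) ∈ W ∧ w - (π w : V) ∈ W := by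
    intro w hw
    have hsw : s w ∈ W := hW e hepres hemap1 hemap2 w hw
    have h2w : w - s w ∈ W := W.sub_mem hw hsw
    rw [hs_apply] at h2w
    have : (2 : K) • (π w : V) ∈ W := by simpa using h2w
    have hπw : (π w : V) ∈ W := by
      have := W.smul_mem (2 : K)⁻¹ this
      rwa [smul_smul, inv_mul_cancel₀ (two_ne_zero), one_smul] at this
    exact ⟨hπw, W.sub_mem hw hπw⟩
  have hsub2 : ∀ x : V, x - (π x : V) ∈ V2 := by
    intro x
    obtain ⟨x1, hx1, x2, hx2, rfl⟩ := hdecomp x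
    have : π (x1 + x2) = ⟨x1, hx1⟩ := by
      rw [map_add, Submodule.projectionOnto_apply_left hcompl ⟨x1, hx1⟩,
        Submodule.projectionOnto_apply_right hcompl ⟨x2, hx2⟩, add_zero]
    rw [this]
    simpa using hx2
  by_cases hb1 : W ⊓ V1 = ⊥ <;> by_cases hb2 : W ⊓ V2 = ⊥
  · -- W = ⊥
    left
    rw [eq_bot_iff]
    intro w hw
    obtain ⟨hπw, hw2⟩ := hsplit w hw
    have hm1 : (π w : V) ∈ W ⊓ V1 := ⟨hπw, (π w).2⟩
    have hm2 : w - (π w : V) ∈ W ⊓ V2 := ⟨hw2, hsub2 w⟩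
    rw [hb1, Submodule.mem_bot] at hm1
    rw [hb2, Submodule.mem_bot, sub_eq_zero] at hm2
    rw [Submodule.mem_bot, hm2, hm1]
  · -- W = V2
    right; right; left
    have hle : V2 ≤ W := aux_trans ω V2 hNd2 W hstab2 hb2
    apply le_antisymm _ hle
    intro w hw
    obtain ⟨hπw, hw2⟩ := hsplit w hw
    have hm1 : (π w : V) ∈ W ⊓ V1 := ⟨hπw, (π w).2⟩
    rw [hb1, Submodule.mem_bot] at hm1
    have := hsub2 w
    rwa [hm1, sub_zero] at this
  · -- W = V1
    right; left
    have hle : V1 ≤ W := aux_trans ω V1 hNd1 W hstab1 hb1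
    apply le_antisymm _ hle
    intro w hw
    obtain ⟨hπw, hw2⟩ := hsplit w hw
    have hm2 : w - (π w : V) ∈ W ⊓ V2 := ⟨hw2, hsub2 w⟩
    rw [hb2, Submodule.mem_bot, sub_eq_zero] at hm2
    rw [hm2]
    exact (π w).2
  · -- W = ⊤
    right; right; right
    have hle1 : V1 ≤ W := aux_trans ω V1 hNd1 W hstab1 hb1
    have hle2 : V2 ≤ W := aux_trans ω V2 hNd2 W hstab2 hb2
    rw [eq_top_iff, ← hcompl.sup_eq_top]
    exact sup_le hle1 hle2
end

section
/- Let η be an alternating 2p-multilinear form on V (with p ≥ 1) that is invariant under the symplectic group of ω, i.e. η(g v_1, …, g v_{2p}) = η(v_1, …, v_{2p}) for every linear automorphism g of V with ω(g x, g y) = ω(x, y) for all x, y ∈ V and all v_1, …, v_{2p} ∈ V. Then η is a rational scalar multiple of the p-fold wedge power ω ∧ ω ∧ ⋯ ∧ ω (p factors) of the 2-form ω. -/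
/-!
STATEMENT 4.  `V` is a finite-dimensional `ℚ`-vector space of dimension `2g` and `ω`
a nondegenerate alternating bilinear form on `V`.  Let `η` be an alternating
`2p`-multilinear form on `V` (`p ≥ 1`) invariant under the symplectic group of `ω`.
Then `η` is a rational scalar multiple of the `p`-fold wedge power `ω ∧ ⋯ ∧ ω`.

We express the wedge power by its explicit pointwise formula: up to a fixed nonzero
rational constant (depending only on the convention for the wedge product),
`(ω^{∧p})(v₁,…,v_{2p}) = ∑_{σ ∈ S_{2p}} sgn(σ) ∏_{i=0}^{p-1} ω(v_{σ(2i)}, v_{σ(2i+1)})`,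
so that "η is a rational multiple of `ω^{∧p}`" is exactly the statement below (the
conventional constant being absorbed into the scalar `c`).
-/

open LinearMap (BilinForm)
namespace SymplInv

def Q (s t : Fin 2) : ℚ :=
  if s = 0 ∧ t = 1 then 1 else if s = 1 ∧ t = 0 then -1 else 0

@[simp] lemma Q01 : Q 0 1 = 1 := rfl
@[simp] lemma Q10 : Q 1 0 = -1 := rfl

variable {V : Type*} [AddCommGroup V] [Module ℚ V] {ι : Type*}


/-- standard symplectic pairing coefficients -/
def P (g : ℕ) (i j : Fin g × Fin 2) : ℚ :=
  if i.1 = j.1 then Q i.2 j.2 else 0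

universe u

theorem exists_sympl_basis : ∀ (g : ℕ) (V : Type u) [AddCommGroup V] [Module ℚ V]
    [FiniteDimensional ℚ V] (ω : BilinForm ℚ V), ω.IsAlt → ω.Nondegenerate →
    Module.finrank ℚ V = 2*g → ∃ b : Module.Basis (Fin g × Fin 2) ℚ V,
      ∀ i j, ω (b i) (b j) = P g i j := by
  intro g
  induction g with
  | zero =>
    intro V _ _ _ ω hAlt hNd hdim
    have : Subsingleton V := Module.finrank_zero_iff.mp (by simpa using hdim)
    exact ⟨Module.Basis.empty V, fun i => absurd i.1.2 (by omega)⟩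
  | succ n IH =>
    intro V _ _ _ ω hAlt hNd hdim
    -- find x ≠ 0
    have hnt : Nontrivial V := by
      apply Module.nontrivial_of_finrank_pos (R := ℚ); omega
    obtain ⟨x, hx⟩ := exists_ne (0 : V)
    -- find y with ω x y = 1
    obtain ⟨y0, hy0⟩ : ∃ y, ω x y ≠ 0 := by
      by_contra h; push_neg at h; exact hx (hNd.1 x h)
    set y : V := (ω x y0)⁻¹ • y0 with hy
    have hxy : ω x y = 1 := by
      simp [hy, map_smul]
      field_simp
    have hyx : ω y x = -1 := by
      have := hAlt.neg_eq x y; rw [hxy] at this; linarith [this]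
    have hxx : ω x x = 0 := hAlt x
    have hyy : ω y y = 0 := hAlt y
    -- x, y linearly independent
    have hli : LinearIndependent ℚ ![x, y] := by
      rw [LinearIndependent.pair_iff]
      intro s t hst
      have h1 : ω x (s • x + t • y) = t := by simp [map_smul, hxx, hxy]
      rw [hst] at h1; simp at h1
      subst h1
      simp at hst
      rcases hst with h | h
      · exact ⟨h, rfl⟩
      · exact absurd h hx
    set W : Submodule ℚ V := Submodule.span ℚ {x, y} with hW
    have hmemx : x ∈ W := Submodule.subset_span (by simp)
    have hmemy : y ∈ W := Submodule.subset_span (by simp)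
    have hrefl : ω.IsRefl := hAlt.isRefl
    -- restriction to W nondegenerate
    have hWnd : (ω.restrict W).Nondegenerate := by
      refine (LinearMap.IsRefl.nondegenerate_iff_separatingLeft (B := ω.restrict W) (fun a b h => hrefl a b h)).mpr ?_
      intro m hm
      obtain ⟨a, b, hab⟩ := Submodule.mem_span_pair.mp m.2
      have h1 := hm ⟨x, hmemx⟩
      have h2 := hm ⟨y, hmemy⟩
      simp [LinearMap.BilinForm.restrict_apply] at h1 h2
      rw [← hab] at h1 h2
      simp [map_smul, hxx, hxy, hyx, hyy] at h1 h2
      have : (m : V) = 0 := by rw [← hab, h2, h1]; simp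
      exact Subtype.ext this
    have hcompl : IsCompl W (ω.orthogonal W) :=
      LinearMap.BilinForm.isCompl_orthogonal_of_restrict_nondegenerate hrefl hWnd
    set W' : Submodule ℚ V := ω.orthogonal W with hW'
    have hW'nd : (ω.restrict W').Nondegenerate := by
      apply LinearMap.BilinForm.nondegenerate_restrict_of_disjoint_orthogonal ω hrefl
      rw [hW', LinearMap.BilinForm.orthogonal_orthogonal hNd hrefl]
      exact hcompl.symm.disjoint
    have hW'alt : (ω.restrict W').IsAlt := fun w => hAlt w
    -- dimension count
    have hfrW : Module.finrank ℚ W = 2 := by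
      have h1 : Module.finrank ℚ (Submodule.span ℚ (Set.range ![x, y])) = 2 := by
        rw [finrank_span_eq_card hli]; simp
      have h2 : Set.range ![x, y] = {x, y} := by
        ext v; simp [Matrix.range_cons]; tauto
      rwa [h2] at h1
    have hfrW' : Module.finrank ℚ W' = 2 * n := by
      have := Submodule.finrank_add_eq_of_isCompl hcompl
      omega
    obtain ⟨bW', hbW'⟩ := IH W' (ω.restrict W') hW'alt hW'nd hfrW'
    -- basis of W
    have hrange2 : Set.range ![x, y] = {x, y} := by
      ext v; simp [Matrix.range_cons]; tauto
    have hspan : Submodule.span ℚ (Set.range ![x, y]) = W := by rw [hW, hrange2]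
    let bW : Module.Basis (Fin 2) ℚ W := (Module.Basis.span hli).map (LinearEquiv.ofEq _ _ hspan)
    have hbW : ∀ t : Fin 2, (bW t : V) = ![x, y] t := by
      intro t
      simp only [bW, Module.Basis.map_apply]
      rw [show ((LinearEquiv.ofEq _ _ hspan) (Module.Basis.span hli t) : V)
          = ((Module.Basis.span hli t : Submodule.span ℚ (Set.range ![x, y])) : V) from rfl]
      exact congrArg Subtype.val (Module.Basis.span_apply hli t)
    -- index equivalence
    let e : (Fin 2 ⊕ (Fin n × Fin 2)) ≃ (Fin (n+1) × Fin 2) :=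
      { toFun := Sum.elim (fun t => (0, t)) (fun kt => (kt.1.succ, kt.2))
        invFun := fun kt => Fin.cases (Sum.inl kt.2) (fun k' => Sum.inr (k', kt.2)) kt.1
        left_inv := by rintro (t | ⟨k, t⟩) <;> simp
        right_inv := by
          rintro ⟨k, t⟩
          induction k using Fin.cases <;> simp }
    let bV : Module.Basis (Fin (n+1) × Fin 2) ℚ V :=
      ((bW.prod bW').map (Submodule.prodEquivOfIsCompl W W' hcompl)).reindex e
    have hbV0 : ∀ t : Fin 2, bV (0, t) = ![x, y] t := by
      intro t
      simp only [bV, Module.Basis.reindex_apply, Module.Basis.map_apply]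
      have he : e.symm (0, t) = Sum.inl t := by
        simp only [e, Equiv.coe_fn_symm_mk]
        exact Fin.cases_zero ..
      rw [he]
      rw [Submodule.coe_prodEquivOfIsCompl']
      simp [hbW t]
    have hbVs : ∀ (k : Fin n) (t : Fin 2), bV (k.succ, t) = (bW' (k, t) : V) := by
      intro k t
      simp only [bV, Module.Basis.reindex_apply, Module.Basis.map_apply]
      have he : e.symm (k.succ, t) = Sum.inr (k, t) := by
        simp only [e, Equiv.coe_fn_symm_mk]
        exact Fin.cases_succ ..
      rw [he]
      rw [Submodule.coe_prodEquivOfIsCompl']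
      simp
    -- orthogonality facts
    have horth : ∀ (w : V), w ∈ W → ∀ (w' : V), w' ∈ W' → ω w w' = 0 ∧ ω w' w = 0 := by
      intro w hw w' hw'
      have h1 : ω w w' = 0 := (LinearMap.BilinForm.mem_orthogonal_iff.mp hw') w hw
      exact ⟨h1, by rw [← hAlt.neg_eq, h1, neg_zero]⟩
    refine ⟨bV, ?_⟩
    rintro ⟨k, t⟩ ⟨l, u⟩
    have hmem2 : ∀ t : Fin 2, ![x, y] t ∈ W := by
      intro t; fin_cases t <;> simpa using (by assumption : _)
    induction k using Fin.cases with
    | zero =>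
      induction l using Fin.cases with
      | zero =>
        rw [hbV0, hbV0]
        have hP : ∀ t u : Fin 2, P (n+1) (0, t) (0, u)
            = (if t = 0 ∧ u = 1 then 1 else if t = 1 ∧ u = 0 then -1 else 0 : ℚ) := by
          intro t u; simp [P, Q, Q]
        rw [hP]
        fin_cases t <;> fin_cases u <;>
          simp only [Matrix.cons_val_zero, Matrix.cons_val_one, Matrix.head_cons] <;>
          norm_num [hxx, hxy, hyx, hyy]
      | succ l =>
        rw [hbV0, hbVs]
        rw [(horth _ (hmem2 t) _ (Submodule.coe_mem _)).1]
        simp [P, Q, (Fin.succ_ne_zero l).symm]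
    | succ k =>
      induction l using Fin.cases with
      | zero =>
        rw [hbV0, hbVs]
        rw [(horth _ (hmem2 u) _ (Submodule.coe_mem _)).2]
        simp [P, Q, Fin.succ_ne_zero k]
      | succ l =>
        rw [hbVs, hbVs]
        have := hbW' (k, t) (l, u)
        rw [LinearMap.BilinForm.restrict_apply] at this
        simp only [LinearMap.domRestrict_apply] at this
        rw [this]
        simp [P, Q, Fin.succ_inj]


/-- positions: `E p (i, t) = 2*i + t`. -/
def E (p : ℕ) : (Fin p × Fin 2) ≃ Fin (2 * p) where
  toFun x := ⟨2 * x.1.1 + x.2.1, by have := x.1.2; have := x.2.2; omega⟩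
  invFun j := (⟨j.1 / 2, by have := j.2; omega⟩, ⟨j.1 % 2, by omega⟩)
  left_inv := by
    rintro ⟨⟨i, hi⟩, ⟨t, ht⟩⟩
    ext <;> simp <;> omega
  right_inv := by
    rintro ⟨j, hj⟩
    ext; simp; omega

lemma E_injective (p : ℕ) : Function.Injective (E p) := (E p).injective

lemma prod_update_eq (p : ℕ) (ω : BilinForm ℚ V) (v : Fin (2 * p) → V) (j : Fin (2 * p)) (x : V) :
    (∏ i : Fin p, ω ((Function.update v j x) (E p (i, 0))) ((Function.update v j x) (E p (i, 1))))
    = (if ((E p).symm j).2 = 0 then ω x (v (E p (((E p).symm j).1, 1)))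
        else ω (v (E p (((E p).symm j).1, 0))) x) *
      ∏ i ∈ Finset.univ.erase ((E p).symm j).1, ω (v (E p (i, 0))) (v (E p (i, 1))) := by
  set i₀ := ((E p).symm j).1 with hi₀
  set t₀ := ((E p).symm j).2 with ht₀
  have hj : E p (i₀, t₀) = j := by rw [hi₀, ht₀]; exact (E p).apply_symm_apply j
  rw [← Finset.mul_prod_erase Finset.univ _ (Finset.mem_univ i₀)]
  have hne : ∀ i ∈ Finset.univ.erase i₀, ∀ t : Fin 2, E p (i, t) ≠ j := by
    intro i hi t h
    have := (E p).injective (h.trans hj.symm)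
    exact (Finset.mem_erase.mp hi).1 (congrArg Prod.fst this)
  congr 1
  · -- the factor at i₀
    by_cases ht : t₀ = 0
    · rw [if_pos ht]
      have h0 : E p (i₀, 0) = j := by rw [← hj, ht]
      have h1 : E p (i₀, 1) ≠ j := by
        rw [← h0]; intro h
        simpa using (E p).injective h
      rw [h0, Function.update_self, Function.update_of_ne h1]
    · have ht1 : t₀ = 1 := by omega
      rw [if_neg ht]
      have h1 : E p (i₀, 1) = j := by rw [← hj, ht1]
      have h0 : E p (i₀, 0) ≠ j := by
        rw [← h1]; intro h
        simpa using (E p).injective h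
      rw [h1, Function.update_self, Function.update_of_ne h0]
  · exact Finset.prod_congr rfl fun i hi => by
      rw [Function.update_of_ne (hne i hi 0), Function.update_of_ne (hne i hi 1)]

/-- the product multilinear map `v ↦ ∏ ω(v_{2i}, v_{2i+1})`. -/
def Mform (p : ℕ) (ω : BilinForm ℚ V) : MultilinearMap ℚ (fun _ : Fin (2 * p) => V) ℚ where
  toFun v := ∏ i : Fin p, ω (v (E p (i, 0))) (v (E p (i, 1)))
  map_update_add' := by
    intro inst v j x y
    beta_reduce
    rw [Subsingleton.elim inst (instDecidableEqFin (2 * p))]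
    rw [prod_update_eq, prod_update_eq, prod_update_eq]
    split <;> simp [add_mul]
  map_update_smul' := by
    intro inst v j c x
    beta_reduce
    rw [Subsingleton.elim inst (instDecidableEqFin (2 * p))]
    rw [prod_update_eq, prod_update_eq]
    split <;> simp [mul_assoc]

@[simp] lemma Mform_apply (p : ℕ) (ω : BilinForm ℚ V) (v : Fin (2 * p) → V) :
    Mform p ω v = ∏ i : Fin p, ω (v (E p (i, 0))) (v (E p (i, 1))) := rfl

/-- the wedge power as alternating map -/
def Wform (p : ℕ) (ω : BilinForm ℚ V) : AlternatingMap ℚ V ℚ (Fin (2 * p)) :=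
  MultilinearMap.alternatization (Mform p ω)

lemma Wform_apply (p : ℕ) (ω : BilinForm ℚ V) (v : Fin (2 * p) → V) :
    Wform p ω v = ∑ σ : Equiv.Perm (Fin (2 * p)),
      ((Equiv.Perm.sign σ : ℤ) : ℚ) *
        ∏ i : Fin p, ω (v (σ (E p (i, 0)))) (v (σ (E p (i, 1)))) := by
  rw [Wform, MultilinearMap.alternatization_apply]
  refine Finset.sum_congr rfl fun σ _ => ?_
  rw [MultilinearMap.domDomCongr_apply, Mform_apply]
  rw [Units.smul_def, zsmul_eq_mul]

lemma Wform_invariant (p : ℕ) (ω : BilinForm ℚ V) (T : V ≃ₗ[ℚ] V)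
    (hT : ∀ x y, ω (T x) (T y) = ω x y) (v : Fin (2 * p) → V) :
    Wform p ω (fun i => T (v i)) = Wform p ω v := by
  rw [Wform_apply, Wform_apply]
  refine Finset.sum_congr rfl fun σ _ => ?_
  congr 1
  exact Finset.prod_congr rfl fun i _ => hT _ _
def Φ (p : ℕ) (x : Equiv.Perm (Fin p) × (Fin p → Bool)) : Equiv.Perm (Fin p × Fin 2) :=
  (Equiv.prodCongrLeft fun _ => x.1) *
    (Equiv.prodCongrRight fun i => if x.2 i then Equiv.swap 0 1 else 1)

lemma Φ_apply (p : ℕ) (x : Equiv.Perm (Fin p) × (Fin p → Bool)) (i : Fin p) (t : Fin 2) :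
    Φ p x (i, t) = (x.1 i, if x.2 i then Equiv.swap 0 1 t else t) := by
  simp only [Φ, Equiv.Perm.mul_apply, Equiv.prodCongrRight_apply, Equiv.prodCongrLeft_apply]
  by_cases h : x.2 i <;> simp [h]

/-- the generic hyperoctahedral term -/
def hterm (p : ℕ) (τ : Equiv.Perm (Fin p × Fin 2)) : ℚ :=
  ((Equiv.Perm.sign τ : ℤ) : ℚ) *
    ∏ i : Fin p, (if (τ (i, 0)).1 = (τ (i, 1)).1 then Q (τ (i, 0)).2 (τ (i, 1)).2 else 0)

lemma hterm_Φ (p : ℕ) (x : Equiv.Perm (Fin p) × (Fin p → Bool)) : hterm p (Φ p x) = 1 := by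
  obtain ⟨π, f⟩ := x
  have hsign : Equiv.Perm.sign (Φ p (π, f)) = ∏ i : Fin p, (if f i then -1 else 1 : ℤˣ) := by
    rw [Φ, map_mul, Equiv.Perm.sign_prodCongrLeft, Equiv.Perm.sign_prodCongrRight]
    rw [Fin.prod_univ_two]
    rw [show (Equiv.Perm.sign π * Equiv.Perm.sign π : ℤˣ) = 1 by
      rcases Int.units_eq_one_or (Equiv.Perm.sign π) with h | h <;> simp [h]]
    rw [one_mul]
    refine Finset.prod_congr rfl fun i _ => ?_
    by_cases h : f i <;> simp [h, Equiv.Perm.sign_swap (by decide : (0 : Fin 2) ≠ 1)]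
  rw [hterm, hsign]
  have hfac : ∀ i : Fin p,
      (if ((Φ p (π, f)) (i, 0)).1 = ((Φ p (π, f)) (i, 1)).1 then
        Q ((Φ p (π, f)) (i, 0)).2 ((Φ p (π, f)) (i, 1)).2 else 0) =
      (if f i then -1 else 1 : ℚ) := by
    intro i
    rw [Φ_apply, Φ_apply]
    by_cases h : f i <;> simp [h]
  rw [Finset.prod_congr rfl fun i _ => hfac i]
  push_cast
  rw [← Finset.prod_mul_distrib]
  refine Finset.prod_eq_one fun i _ => ?_
  by_cases h : f i <;> simp [h]

lemma fin2_cases (x y z : Fin 2) (h : y ≠ z) : x = y ∨ x = z := by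
  revert h; fin_cases x <;> fin_cases y <;> fin_cases z <;> decide

lemma fin2_ne (x y : Fin 2) (h : ¬ x = 1) : x = 0 := by
  revert h; fin_cases x <;> decide

lemma Φ_injective (p : ℕ) : Function.Injective (Φ p) := by
  rintro ⟨π, f⟩ ⟨π', f'⟩ h
  have happ : ∀ i : Fin p, Φ p (π, f) (i, 0) = Φ p (π', f') (i, 0) := fun i => by rw [h]
  simp only [Φ_apply] at happ
  have hπ : π = π' := by
    ext i
    exact congrArg Fin.val (by simpa using congrArg Prod.fst (happ i))
  have hf : f = f' := by
    funext i
    have := congrArg Prod.snd (happ i)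
    by_cases h1 : f i <;> by_cases h2 : f' i <;> simp [h1, h2] at this ⊢
  rw [hπ, hf]

lemma hterm_ne_zero_mem (p : ℕ) (τ : Equiv.Perm (Fin p × Fin 2)) (hτ : hterm p τ ≠ 0) :
    ∃ x, Φ p x = τ := by
  have hfac : ∀ i : Fin p, (τ (i, 0)).1 = (τ (i, 1)).1 ∧ (τ (i, 0)).2 ≠ (τ (i, 1)).2 := by
    intro i
    by_contra hcon
    apply hτ
    rw [hterm]
    rw [Finset.prod_eq_zero (Finset.mem_univ i), mul_zero]
    by_cases h1 : (τ (i, 0)).1 = (τ (i, 1)).1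
    · push_neg at hcon
      have h2 := hcon h1
      rw [if_pos h1, Q, if_neg, if_neg]
      · rintro ⟨ha, hb⟩; rw [ha, hb] at h2; exact absurd h2 (by decide)
      · rintro ⟨ha, hb⟩; rw [ha, hb] at h2; exact absurd h2 (by decide)
    · rw [if_neg h1]
  have hinj : Function.Injective (fun i : Fin p => (τ (i, 0)).1) := by
    intro i j hij
    simp only at hij
    rcases fin2_cases (τ (j, 0)).2 (τ (i, 0)).2 (τ (i, 1)).2 (hfac i).2 with h2 | h2
    · have := τ.injective (Prod.ext_iff.mpr ⟨hij.symm, h2⟩)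
      exact (congrArg Prod.fst this).symm
    · have := τ.injective (Prod.ext_iff.mpr ⟨hij.symm.trans (hfac i).1, h2⟩)
      have h4 : (0 : Fin 2) = 1 := congrArg Prod.snd this
      exact absurd h4 (by decide)
  let π : Equiv.Perm (Fin p) :=
    Equiv.ofBijective _ ((Finite.injective_iff_bijective).mp hinj)
  refine ⟨(π, fun i => decide ((τ (i, 0)).2 = 1)), ?_⟩
  apply Equiv.ext
  rintro ⟨i, t⟩
  rw [Φ_apply]
  have hπi : π i = (τ (i, 0)).1 := rfl
  have hb0 : ∀ h1 : (τ (i, 0)).2 = 0, (τ (i, 1)).2 = 1 := by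
    intro h1
    rcases fin2_cases (τ (i, 1)).2 0 1 (by decide) with h | h
    · exact absurd (h1.trans h.symm) (hfac i).2
    · exact h
  have hb1 : ∀ h1 : (τ (i, 0)).2 = 1, (τ (i, 1)).2 = 0 := by
    intro h1
    rcases fin2_cases (τ (i, 1)).2 0 1 (by decide) with h | h
    · exact h
    · exact absurd (h1.trans h.symm) (hfac i).2
  rcases fin2_cases t 0 1 (by decide) with rfl | rfl <;>
    rcases fin2_cases (τ (i, 0)).2 0 1 (by decide) with h1 | h1 <;>
    rw [Prod.ext_iff] <;> constructor
  · exact hπi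
  · simp [h1]
  · exact hπi
  · simp [h1]
  · rw [hπi]; exact (hfac i).1
  · simp [h1, hb0 h1]
  · rw [hπi]; exact (hfac i).1
  · simp [h1, hb1 h1]

/-- the hyperoctahedral sum evaluates to the cardinality -/
lemma hterm_sum (p : ℕ) : ∑ τ : Equiv.Perm (Fin p × Fin 2), hterm p τ
    = (Fintype.card (Equiv.Perm (Fin p) × (Fin p → Bool)) : ℚ) := by
  have hc : (Fintype.card (Equiv.Perm (Fin p) × (Fin p → Bool)) : ℚ)
      = ∑ _x : Equiv.Perm (Fin p) × (Fin p → Bool), (1 : ℚ) := by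
    rw [Fintype.card_eq_sum_ones]; push_cast; rfl
  rw [hc]
  symm
  refine Finset.sum_bij_ne_zero (fun x _ _ => Φ p x) (fun x _ _ => Finset.mem_univ _)
    (fun x₁ _ _ x₂ _ _ h => Φ_injective p h) ?_ ?_
  · intro τ _ hτ
    obtain ⟨x, hx⟩ := hterm_ne_zero_mem p τ hτ
    exact ⟨x, Finset.mem_univ _, one_ne_zero, hx⟩
  · intro x _ _
    rw [hterm_Φ]


/-- a linear automorphism sending `b i` to `u i • b (e i)` -/
noncomputable def Tgen (b : Module.Basis ι ℚ V) (e : ι ≃ ι) (u : ι → ℚ) (hu : ∀ i, IsUnit (u i)) :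
    V ≃ₗ[ℚ] V :=
  b.equiv ((b.reindex e.symm).isUnitSMul (fun i => hu i)) (Equiv.refl ι)

lemma Tgen_apply (b : Module.Basis ι ℚ V) (e : ι ≃ ι) (u : ι → ℚ) (hu : ∀ i, IsUnit (u i)) (i : ι) :
    Tgen b e u hu (b i) = u i • b (e i) := by
  rw [Tgen, Module.Basis.equiv_apply, Equiv.refl_apply, Module.Basis.isUnitSMul_apply, Module.Basis.reindex_apply,
    Equiv.symm_symm]

lemma sympl_of_basis {ω : BilinForm ℚ V} (b : Module.Basis ι ℚ V) (T : V ≃ₗ[ℚ] V)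
    (h : ∀ i j, ω (T (b i)) (T (b j)) = ω (b i) (b j)) : ∀ x y, ω (T x) (T y) = ω x y := by
  have hq : ω.compl₁₂ (T : V →ₗ[ℚ] V) (T : V →ₗ[ℚ] V) = ω := by
    apply b.ext; intro i
    apply b.ext; intro j
    rw [LinearMap.compl₁₂_apply]
    exact h i j
  intro x y
  conv_rhs => rw [← hq]
  rfl

/-- canonical tuple associated to a `p`-element set of symplectic pair indices -/
noncomputable def tup (p g : ℕ) (S : Finset (Fin g)) (hS : S.card = p) :
    Fin (2 * p) → Fin g × Fin 2 :=
  fun j => ((S.orderIsoOfFin hS ((E p).symm j).1 : Fin g), ((E p).symm j).2)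

lemma tup_E (p g : ℕ) (S : Finset (Fin g)) (hS : S.card = p) (i : Fin p) (t : Fin 2) :
    tup p g S hS (E p (i, t)) = ((S.orderIsoOfFin hS i : Fin g), t) := by
  rw [tup, Equiv.symm_apply_apply]

lemma tup_injective (p g : ℕ) (S : Finset (Fin g)) (hS : S.card = p) :
    Function.Injective (tup p g S hS) := by
  intro j j' h
  rw [tup, tup, Prod.ext_iff] at h
  obtain ⟨h1, h2⟩ := h
  have h1' : ((E p).symm j).1 = ((E p).symm j').1 :=
    (S.orderIsoOfFin hS).injective (Subtype.coe_injective h1)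
  have : (E p).symm j = (E p).symm j' := Prod.ext_iff.mpr ⟨h1', h2⟩
  exact (E p).symm.injective this

lemma range_tup (p g : ℕ) (S : Finset (Fin g)) (hS : S.card = p) :
    Set.range (tup p g S hS) = {x : Fin g × Fin 2 | x.1 ∈ S} := by
  ext ⟨k, t⟩
  constructor
  · rintro ⟨j, hj⟩
    have : ((tup p g S hS j).1 : Fin g) ∈ S := (S.orderIsoOfFin hS ((E p).symm j).1).2
    rw [hj] at this
    exact this
  · intro hk
    refine ⟨E p ((S.orderIsoOfFin hS).symm ⟨k, hk⟩, t), ?_⟩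
    rw [tup_E, OrderIso.apply_symm_apply]

lemma Wform_tup {g p : ℕ} (ω : BilinForm ℚ V) (b : Module.Basis (Fin g × Fin 2) ℚ V)
    (hb : ∀ i j, ω (b i) (b j) = P g i j) (S : Finset (Fin g)) (hS : S.card = p) :
    Wform p ω (fun j => b (tup p g S hS j))
      = (Fintype.card (Equiv.Perm (Fin p) × (Fin p → Bool)) : ℚ) := by
  rw [Wform_apply, ← hterm_sum p]
  refine (Fintype.sum_equiv ((E p).permCongr) _ _ (fun τ => ?_)).symm
  rw [hterm, Equiv.Perm.sign_permCongr]
  congr 1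
  refine Finset.prod_congr rfl fun i _ => ?_
  have hap : ∀ t : Fin 2, ((E p).permCongr τ) (E p (i, t)) = E p (τ (i, t)) := by
    intro t
    rw [Equiv.permCongr_apply, Equiv.symm_apply_apply]
  rw [hap, hap, tup, tup, Equiv.symm_apply_apply, Equiv.symm_apply_apply, hb, P]
  by_cases h : (τ (i, 0)).1 = (τ (i, 1)).1
  · rw [if_pos h, if_pos (by rw [h])]
  · rw [if_neg h, if_neg (fun hc => h ((S.orderIsoOfFin hS).injective (Subtype.coe_injective hc)))]

lemma key_eval {g p : ℕ} (ω : BilinForm ℚ V) (b : Module.Basis (Fin g × Fin 2) ℚ V)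
    (hb : ∀ i j, ω (b i) (b j) = P g i j)
    (S₀ : Finset (Fin g)) (hS₀ : S₀.card = p) (s : Fin (2 * p) → Fin g × Fin 2) :
    ∃ r : ℚ, ∀ θ : AlternatingMap ℚ V ℚ (Fin (2 * p)),
      (∀ T : V ≃ₗ[ℚ] V, (∀ x y, ω (T x) (T y) = ω x y) →
        ∀ v : Fin (2 * p) → V, θ (fun i => T (v i)) = θ v) →
      θ (fun j => b (s j)) = r * θ (fun j => b (tup p g S₀ hS₀ j)) := by
  classical
  by_cases hinj : Function.Injective s
  swap
  · refine ⟨0, fun θ _ => ?_⟩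
    rw [zero_mul]
    obtain ⟨j₁, j₂, heq, hne⟩ := Function.not_injective_iff.mp hinj
    exact θ.map_eq_zero_of_eq _ (congrArg b heq) hne
  by_cases hbal : ∀ k : Fin g, ((k, 0) ∈ Set.range s ↔ (k, 1) ∈ Set.range s)
  swap
  · -- unbalanced: weight argument kills θ (b ∘ s)
    push_neg at hbal
    obtain ⟨k, hk⟩ := hbal
    refine ⟨0, fun θ hθ => ?_⟩
    rw [zero_mul]
    set u : Fin g × Fin 2 → ℚ :=
      fun i => if i = (k, 0) then 2 else if i = (k, 1) then 2⁻¹ else 1 with hu_def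
    have hu : ∀ i, IsUnit (u i) := by
      intro i
      rw [isUnit_iff_ne_zero]
      simp only [hu_def]
      split
      · norm_num
      · split <;> norm_num
    set T := Tgen b (Equiv.refl _) u hu with hT_def
    have hTb : ∀ i, T (b i) = u i • b i := fun i => Tgen_apply b _ u hu i
    have hT : ∀ x y, ω (T x) (T y) = ω x y := by
      refine sympl_of_basis b T fun i j => ?_
      rw [hTb, hTb]
      simp only [map_smul, LinearMap.smul_apply, smul_eq_mul, hb]
      rcases i with ⟨a, si⟩
      rcases j with ⟨c, ti⟩
      by_cases hac : a = c
      · subst hac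
        rcases fin2_cases si 0 1 (by decide) with rfl | rfl <;>
          rcases fin2_cases ti 0 1 (by decide) with rfl | rfl <;>
          by_cases hak : a = k <;>
          simp [hu_def, P, Q, hak, Prod.ext_iff] <;> norm_num
      · simp [P, hac]
    have h1 := hθ T hT (fun j => b (s j))
    have h2 : (fun j => T (b (s j))) = fun j => u (s j) • b (s j) := by
      funext j; rw [hTb]
    rw [h2] at h1
    have h3 : θ (fun j => u (s j) • b (s j)) = (∏ j, u (s j)) • θ (fun j => b (s j)) := by
      exact θ.toMultilinearMap.map_smul_univ (fun j => u (s j)) (fun j => b (s j))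
    rw [h3] at h1
    rcases hk with ⟨hmem0, hmem1⟩ | ⟨hmem0, hmem1⟩
    · obtain ⟨j₀, hj₀⟩ := hmem0
      have hprod : (∏ j, u (s j)) = 2 := by
        rw [Finset.prod_eq_single j₀]
        · simp only [hu_def, hj₀]; simp
        · intro j _ hjne
          have hne1 : s j ≠ (k, 0) := fun hc => hjne (hinj (hc.trans hj₀.symm))
          have hne2 : s j ≠ (k, 1) := fun hc => hmem1 ⟨j, hc⟩
          simp only [hu_def]
          rw [if_neg hne1, if_neg hne2]
        · intro h; exact absurd (Finset.mem_univ j₀) h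
      rw [hprod, smul_eq_mul] at h1
      linarith
    · obtain ⟨j₀, hj₀⟩ := hmem1
      have hprod : (∏ j, u (s j)) = 2⁻¹ := by
        rw [Finset.prod_eq_single j₀]
        · simp only [hu_def, hj₀]; norm_num
        · intro j _ hjne
          have hne1 : s j ≠ (k, 0) := fun hc => hmem0 ⟨j, hc⟩
          have hne2 : s j ≠ (k, 1) := fun hc => hjne (hinj (hc.trans hj₀.symm))
          simp only [hu_def]
          rw [if_neg hne1, if_neg hne2]
        · intro h; exact absurd (Finset.mem_univ j₀) h
      rw [hprod, smul_eq_mul] at h1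
      linarith
  · -- balanced case
    have hboth : ∀ k : Fin g, (∃ j, (s j).1 = k) → ∀ t : Fin 2, (k, t) ∈ Set.range s := by
      intro k ⟨j, hj⟩ t
      have hjmem : (k, (s j).2) ∈ Set.range s := ⟨j, by rw [← hj]⟩
      have hbk := hbal k
      rcases fin2_cases (s j).2 0 1 (by decide) with h2 | h2 <;>
        rcases fin2_cases t 0 1 (by decide) with rfl | rfl
      · rwa [h2] at hjmem
      · exact hbk.mp (by rwa [h2] at hjmem)
      · exact hbk.mpr (by rwa [h2] at hjmem)
      · rwa [h2] at hjmem
    set S : Finset (Fin g) := Finset.image (fun j => (s j).1) Finset.univ with hS_def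
    have hmemS : ∀ k, k ∈ S ↔ ∃ j, (s j).1 = k := by
      intro k; rw [hS_def]; simp
    have himg : Finset.image s Finset.univ = S ×ˢ Finset.univ := by
      ext ⟨k, t⟩
      simp only [Finset.mem_image, Finset.mem_univ, true_and, Finset.mem_product, and_true]
      constructor
      · rintro ⟨j, hj⟩
        exact (hmemS k).mpr ⟨j, by rw [hj]⟩
      · intro hkS
        exact hboth k ((hmemS k).mp hkS) t
    have hScard : S.card = p := by
      have h2p : (Finset.image s Finset.univ).card = 2 * p := by
        rw [Finset.card_image_of_injective _ hinj, Finset.card_univ, Fintype.card_fin]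
      rw [himg, Finset.card_product, Finset.card_univ, Fintype.card_fin] at h2p
      omega
    have hrange : Set.range s = {x : Fin g × Fin 2 | x.1 ∈ S} := by
      ext ⟨k, t⟩
      constructor
      · rintro ⟨j, hj⟩
        exact (hmemS k).mpr ⟨j, by rw [hj]⟩
      · intro hkS
        exact hboth k ((hmemS k).mp hkS) t
    -- the permutation relating s to tup S
    have hrr : Set.range s = Set.range (tup p g S hScard) := by
      rw [hrange, range_tup]
    set π : Equiv.Perm (Fin (2 * p)) :=
      (Equiv.ofInjective s hinj).trans ((Equiv.setCongr hrr).trans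
        (Equiv.ofInjective _ (tup_injective p g S hScard)).symm) with hπ_def
    have hπ : ∀ j, tup p g S hScard (π j) = s j := by
      intro j
      rw [hπ_def]
      simp only [Equiv.trans_apply]
      rw [Equiv.apply_ofInjective_symm (tup_injective p g S hScard)]
      rfl
    -- transport transformation from S to S₀
    have hcc : Fintype.card {x : Fin g // ¬ x ∈ S} = Fintype.card {x : Fin g // ¬ x ∈ S₀} := by
      rw [Fintype.card_subtype_compl, Fintype.card_subtype_compl]
      congr 1
      rw [Fintype.card_coe, Fintype.card_coe, hScard, hS₀]
    set eS : {x : Fin g // x ∈ S} ≃ {x : Fin g // x ∈ S₀} :=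
      (S.orderIsoOfFin hScard).toEquiv.symm.trans (S₀.orderIsoOfFin hS₀).toEquiv with heS_def
    set e : Equiv.Perm (Fin g) := Equiv.subtypeCongr eS (Fintype.equivOfCardEq hcc) with he_def
    have he : ∀ i : Fin p, e ((S.orderIsoOfFin hScard i : Fin g)) = (S₀.orderIsoOfFin hS₀ i : Fin g) := by
      intro i
      rw [he_def, Equiv.subtypeCongr]
      simp only [Equiv.trans_apply]
      rw [Equiv.sumCompl_symm_apply_of_pos (S.orderIsoOfFin hScard i).2]
      rw [Equiv.sumCongr_apply]
      simp only [Sum.map_inl]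
      rw [Equiv.sumCompl_apply_inl]
      rw [heS_def]
      simp only [Equiv.trans_apply]
      rw [show (⟨(S.orderIsoOfFin hScard i : Fin g), (S.orderIsoOfFin hScard i).2⟩ :
            {x : Fin g // x ∈ S}) = S.orderIsoOfFin hScard i from rfl]
      rw [show ((S.orderIsoOfFin hScard).toEquiv.symm (S.orderIsoOfFin hScard i)) = i by
        simp]
      rfl
    set T := Tgen b (Equiv.prodCongr e (Equiv.refl (Fin 2))) (fun _ => 1) (fun _ => isUnit_one)
      with hT_def
    have hTb : ∀ i, T (b i) = b (e i.1, i.2) := by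
      intro i
      rw [hT_def, Tgen_apply, one_smul]
      rfl
    have hT : ∀ x y, ω (T x) (T y) = ω x y := by
      refine sympl_of_basis b T fun i j => ?_
      rw [hTb, hTb, hb, hb, P, P]
      simp only [EmbeddingLike.apply_eq_iff_eq]
    refine ⟨((Equiv.Perm.sign π : ℤ) : ℚ), fun θ hθ => ?_⟩
    have hstep1 : θ (fun j => b (s j))
        = ((Equiv.Perm.sign π : ℤ) : ℚ) * θ (fun j => b (tup p g S hScard j)) := by
      have hfe : (fun j => b (s j)) = (fun j => b (tup p g S hScard j)) ∘ π := by
        funext j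
        simp only [Function.comp_apply]
        rw [hπ j]
      rw [hfe, AlternatingMap.map_perm, Units.smul_def, zsmul_eq_mul]
    have hstep2 : θ (fun j => b (tup p g S hScard j)) = θ (fun j => b (tup p g S₀ hS₀ j)) := by
      have h1 := hθ T hT (fun j => b (tup p g S hScard j))
      have h2 : (fun j => T (b (tup p g S hScard j))) = fun j => b (tup p g S₀ hS₀ j) := by
        funext j
        rw [hTb, tup, tup]
        rw [he ((E p).symm j).1]
      rw [← h1, h2]
    rw [hstep1, hstep2]

end SymplInv

theorem symplectic_invariant_alternating_form_is_multiple_of_wedge_power_of_omega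
    {V : Type*} [AddCommGroup V] [Module ℚ V] [FiniteDimensional ℚ V]
    (g : ℕ) (hdim : Module.finrank ℚ V = 2 * g)
    (ω : LinearMap.BilinForm ℚ V) (hAlt : ω.IsAlt) (hNd : ω.Nondegenerate)
    (p : ℕ) (hp : 1 ≤ p)
    (η : AlternatingMap ℚ V ℚ (Fin (2 * p)))
    (hinv : ∀ T : V ≃ₗ[ℚ] V, (∀ x y, ω (T x) (T y) = ω x y) →
      ∀ v : Fin (2 * p) → V, η (fun i => T (v i)) = η v) :
    ∃ c : ℚ, ∀ v : Fin (2 * p) → V,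
      η v = c * ∑ σ : Equiv.Perm (Fin (2 * p)),
        ((Equiv.Perm.sign σ : ℤ) : ℚ) *
          ∏ i : Fin p,
            ω (v (σ ⟨2 * (i : ℕ), by have := i.isLt; omega⟩))
              (v (σ ⟨2 * (i : ℕ) + 1, by have := i.isLt; omega⟩)) := by
  classical
  obtain ⟨b, hb⟩ := SymplInv.exists_sympl_basis g V ω hAlt hNd hdim
  have hW : ∀ v : Fin (2 * p) → V,
      (∑ σ : Equiv.Perm (Fin (2 * p)),
        ((Equiv.Perm.sign σ : ℤ) : ℚ) *
          ∏ i : Fin p,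
            ω (v (σ ⟨2 * (i : ℕ), by have := i.isLt; omega⟩))
              (v (σ ⟨2 * (i : ℕ) + 1, by have := i.isLt; omega⟩)))
      = SymplInv.Wform p ω v := by
    intro v
    rw [SymplInv.Wform_apply]
    refine Finset.sum_congr rfl fun σ _ => ?_
    congr 1
  by_cases hpg : p ≤ g
  · have hcard : p ≤ (Finset.univ : Finset (Fin g)).card := by
      rw [Finset.card_univ, Fintype.card_fin]; exact hpg
    obtain ⟨S₀, -, hS₀⟩ := Finset.exists_subset_card_eq hcard
    set A := η (fun j => b (SymplInv.tup p g S₀ hS₀ j)) with hA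
    set Bq : ℚ := (Fintype.card (Equiv.Perm (Fin p) × (Fin p → Bool)) : ℚ) with hBq
    have hBne : Bq ≠ 0 := by
      rw [hBq]
      exact_mod_cast Fintype.card_ne_zero
    have hWtup : SymplInv.Wform p ω (fun j => b (SymplInv.tup p g S₀ hS₀ j)) = Bq :=
      SymplInv.Wform_tup ω b hb S₀ hS₀
    refine ⟨A / Bq, fun v => ?_⟩
    have hext : η.toMultilinearMap = ((A / Bq) • SymplInv.Wform p ω).toMultilinearMap := by
      apply Module.Basis.ext_multilinear (fun _ => b)
      intro s
      obtain ⟨r, hr⟩ := SymplInv.key_eval ω b hb S₀ hS₀ s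
      have h1 := hr η hinv
      have h2 := hr (SymplInv.Wform p ω) (fun T hT v => SymplInv.Wform_invariant p ω T hT v)
      show η (fun i => b (s i)) = ((A / Bq) • SymplInv.Wform p ω) (fun i => b (s i))
      rw [AlternatingMap.smul_apply, smul_eq_mul, h1, h2, hWtup, ← hA]
      field_simp
    have hval : η v = (A / Bq) * SymplInv.Wform p ω v := by
      have := DFunLike.congr_fun hext v
      simpa using this
    rw [hval, hW v]
  · refine ⟨0, fun v => ?_⟩
    have hzero : η.toMultilinearMap
        = (0 : AlternatingMap ℚ V ℚ (Fin (2 * p))).toMultilinearMap := by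
      apply Module.Basis.ext_multilinear (fun _ => b)
      intro s
      have hcardlt : Fintype.card (Fin g × Fin 2) < Fintype.card (Fin (2 * p)) := by
        simp only [Fintype.card_prod, Fintype.card_fin]
        omega
      obtain ⟨j₁, j₂, hne, heq⟩ := Fintype.exists_ne_map_eq_of_card_lt s hcardlt
      show η (fun i => b (s i)) = (0 : AlternatingMap ℚ V ℚ (Fin (2 * p))) (fun i => b (s i))
      rw [AlternatingMap.zero_apply]
      exact η.map_eq_zero_of_eq _ (congrArg b heq) hne
    have hv0 : η v = 0 := by simpa using DFunLike.congr_fun hzero v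
    rw [hv0, zero_mul]
end
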